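/- arXiv:2211.08597 — 4 statements merged into one kernel-verified Lean document; each statement's English description precedes it below -/
import Mathlib

section
/- Let H and H_S be symmetric positive semidefinite p×p matrices, let ρ > 0, and let ζ ∈ (0,1). If ‖(H + ρI)^{-1/2}(H_S − H)(H + ρI)^{-1/2}‖ ≤ ζ/(1 + ζ) (operator norm), then (1 − ζ)(H_S + ρI) ⪯ H + ρI ⪯ (1 + ζ)(H_S + ρI). -/
open Matrix

/-- The positive semidefinite square root of a PSD matrix (junk value `0` otherwise). -/
noncomputable def psdSqrt {p : ℕ} (B : Matrix (Fin p) (Fin p) ℝ) :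
    Matrix (Fin p) (Fin p) ℝ := by
  classical exact if h : B.PosSemidef then
    h.1.eigenvectorUnitary.1 * diagonal ((RCLike.ofReal : ℝ → ℝ) ∘ Real.sqrt ∘ h.1.eigenvalues) *
      (star h.1.eigenvectorUnitary : Matrix (Fin p) (Fin p) ℝ) else 0

/-- The inverse square root `B^{-1/2}` of a positive definite matrix `B`. -/
noncomputable def invSqrt {p : ℕ} (B : Matrix (Fin p) (Fin p) ℝ) :
    Matrix (Fin p) (Fin p) ℝ :=
  (psdSqrt B)⁻¹

/-- The Loewner order: `A ⪯ B` iff `B - A` is positive semidefinite. -/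
def LoewnerLE {p : ℕ} (A B : Matrix (Fin p) (Fin p) ℝ) : Prop := (B - A).PosSemidef

/-- The spectral (operator) norm of a matrix: the supremum of `‖Bx‖` over Euclidean
unit vectors `x`. -/
noncomputable def opNorm {m n : Type*} [Fintype m] [Fintype n] (B : Matrix m n ℝ) : ℝ :=
  sSup {r : ℝ | ∃ x : n → ℝ, (∑ j, x j ^ 2) = 1 ∧ r = Real.sqrt (∑ i, (B.mulVec x i) ^ 2)}

lemma opNorm_bddAbove {p : ℕ} (E : Matrix (Fin p) (Fin p) ℝ) :
    BddAbove {r : ℝ | ∃ x : Fin p → ℝ, (∑ j, x j ^ 2) = 1 ∧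
      r = Real.sqrt (∑ i, (E.mulVec x i) ^ 2)} := by
  refine ⟨Real.sqrt (∑ i, ∑ j, E i j ^ 2), ?_⟩
  rintro r ⟨x, hx1, rfl⟩
  apply Real.sqrt_le_sqrt
  refine Finset.sum_le_sum fun i _ => ?_
  have : E.mulVec x i = ∑ j, E i j * x j := by simp [Matrix.mulVec, dotProduct]
  rw [this]
  calc (∑ j, E i j * x j) ^ 2 ≤ (∑ j, E i j ^ 2) * (∑ j, x j ^ 2) :=
        Finset.sum_mul_sq_le_sq_mul_sq _ _ _
    _ = ∑ j, E i j ^ 2 := by rw [hx1, mul_one]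

lemma quad_abs_le {p : ℕ} (E : Matrix (Fin p) (Fin p) ℝ) (ε : ℝ) (hε : 0 ≤ ε)
    (h : opNorm E ≤ ε) (y : Fin p → ℝ) :
    |y ⬝ᵥ E.mulVec y| ≤ ε * (∑ i, y i ^ 2) := by
  by_cases hy : (∑ i, y i ^ 2) = 0
  · have hy0 : y = 0 := by
      funext i
      have := (Finset.sum_eq_zero_iff_of_nonneg (fun i _ => sq_nonneg (y i))).mp hy i
        (Finset.mem_univ i)
      exact pow_eq_zero_iff (two_ne_zero) |>.mp this
    simp [hy0]
  · have hy' : 0 < ∑ i, y i ^ 2 :=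
      lt_of_le_of_ne (Finset.sum_nonneg fun i _ => sq_nonneg (y i)) (Ne.symm hy)
    set c : ℝ := Real.sqrt (∑ i, y i ^ 2) with hc
    have hcpos : 0 < c := Real.sqrt_pos.mpr hy'
    have hc2 : c ^ 2 = ∑ i, y i ^ 2 := Real.sq_sqrt hy'.le
    set x : Fin p → ℝ := c⁻¹ • y with hxdef
    have hx1 : (∑ j, x j ^ 2) = 1 := by
      simp only [hxdef, Pi.smul_apply, smul_eq_mul, mul_pow, ← Finset.mul_sum]
      rw [← hc2]
      field_simp
    have hmem : Real.sqrt (∑ i, (E.mulVec x i) ^ 2) ≤ ε := by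
      refine le_trans (le_csSup (opNorm_bddAbove E) ⟨x, hx1, rfl⟩) h
    have hsq : (x ⬝ᵥ E.mulVec x) ^ 2 ≤ ε ^ 2 := by
      have cs : (∑ i, x i * E.mulVec x i) ^ 2 ≤
          (∑ i, x i ^ 2) * (∑ i, (E.mulVec x i) ^ 2) :=
        Finset.sum_mul_sq_le_sq_mul_sq _ _ _
      have h1 : x ⬝ᵥ E.mulVec x = ∑ i, x i * E.mulVec x i := rfl
      have h2 : (∑ i, (E.mulVec x i) ^ 2)
          = Real.sqrt (∑ i, (E.mulVec x i) ^ 2) ^ 2 :=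
        (Real.sq_sqrt (Finset.sum_nonneg fun i _ => sq_nonneg _)).symm
      have hs2 : (∑ i, (E.mulVec x i) ^ 2) ≤ ε ^ 2 := by
        nlinarith [hmem, Real.sqrt_nonneg (∑ i, (E.mulVec x i) ^ 2)]
      rw [h1]
      nlinarith [cs, hx1]
    have hxabs : |x ⬝ᵥ E.mulVec x| ≤ ε := by
      rw [abs_le]; constructor <;> nlinarith [hsq]
    have hrel : y ⬝ᵥ E.mulVec y = c ^ 2 * (x ⬝ᵥ E.mulVec x) := by
      simp only [hxdef, Matrix.mulVec_smul, smul_dotProduct,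
        dotProduct_smul, smul_eq_mul]
      field_simp
    rw [hrel, ← hc2]
    calc |c ^ 2 * (x ⬝ᵥ E.mulVec x)| = c ^ 2 * |x ⬝ᵥ E.mulVec x| := by
          rw [abs_mul, abs_of_nonneg (sq_nonneg c)]
      _ ≤ c ^ 2 * ε := by
          exact mul_le_mul_of_nonneg_left hxabs (sq_nonneg c)
      _ = ε * c ^ 2 := mul_comm _ _

lemma conj_dot {p : ℕ} (T N : Matrix (Fin p) (Fin p) ℝ) (hT : Tᵀ = T) (y : Fin p → ℝ) :
    (T *ᵥ y) ⬝ᵥ (N *ᵥ (T *ᵥ y)) = y ⬝ᵥ ((T * N * T) *ᵥ y) := by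
  conv_rhs => rw [← Matrix.mulVec_mulVec, ← Matrix.mulVec_mulVec,
    Matrix.dotProduct_mulVec, ← Matrix.mulVec_transpose, hT]

/-- **From relative spectral-norm closeness to two-sided Loewner bounds.**
If `H, H_S` are symmetric PSD, `ρ > 0`, `ζ ∈ (0,1)`, and
`‖(H+ρI)^{-1/2}(H_S − H)(H+ρI)^{-1/2}‖ ≤ ζ/(1+ζ)`, then
`(1−ζ)(H_S+ρI) ⪯ H+ρI ⪯ (1+ζ)(H_S+ρI)`. -/
theorem loewner_of_relative_error {p : ℕ} (H HS : Matrix (Fin p) (Fin p) ℝ)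
    (hH : H.PosSemidef) (hHS : HS.PosSemidef)
    (ρ ζ : ℝ) (hρ : 0 < ρ) (hζ : ζ ∈ Set.Ioo (0 : ℝ) 1)
    (hnorm : opNorm (invSqrt (H + ρ • 1) * (HS - H) * invSqrt (H + ρ • 1)) ≤ ζ / (1 + ζ)) :
    LoewnerLE ((1 - ζ) • (HS + ρ • 1)) (H + ρ • 1) ∧
      LoewnerLE (H + ρ • 1) ((1 + ζ) • (HS + ρ • 1)) := by
  obtain ⟨hζ0, hζ1⟩ := hζ
  set M : Matrix (Fin p) (Fin p) ℝ := H + ρ • 1 with hMdef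
  have h1herm : (ρ • 1 : Matrix (Fin p) (Fin p) ℝ).IsHermitian := by
    simp [Matrix.IsHermitian]
  have hM : M.PosDef := by
    refine Matrix.PosDef.posSemidef_add hH (posDef_iff_dotProduct_mulVec.mpr ⟨h1herm, fun x hx => ?_⟩)
    rw [smul_mulVec, one_mulVec, dotProduct_smul, star_trivial]
    have hxx : 0 < x ⬝ᵥ x := by
      have := dotProduct_star_self_pos_iff (v := x)
      simp only [star_trivial] at this
      exact this.mpr hx
    positivity
  have hMsd : M.PosSemidef := hM.posSemidef
  set S : Matrix (Fin p) (Fin p) ℝ := psdSqrt M with hSdef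
  have hS : S = hMsd.1.eigenvectorUnitary.1 * diagonal ((RCLike.ofReal : ℝ → ℝ) ∘ Real.sqrt ∘ hMsd.1.eigenvalues) *
      (star hMsd.1.eigenvectorUnitary : Matrix (Fin p) (Fin p) ℝ) := by
    rw [hSdef, psdSqrt, dif_pos hMsd]
  have hSsd : S.PosSemidef := by
    rw [hS]
    have := (PosSemidef.diagonal (d := (RCLike.ofReal : ℝ → ℝ) ∘ Real.sqrt ∘ hMsd.1.eigenvalues)
      (fun i => by simp [Real.sqrt_nonneg])).mul_mul_conjTranspose_same hMsd.1.eigenvectorUnitary.1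
    simpa [Matrix.star_eq_conjTranspose] using this
  have hSS : S * S = M := by
    have hspec := hMsd.1.spectral_theorem
    rw [Unitary.conjStarAlgAut_apply] at hspec
    have hu : (star hMsd.1.eigenvectorUnitary : Matrix (Fin p) (Fin p) ℝ) * hMsd.1.eigenvectorUnitary.1 = 1 :=
      Unitary.coe_star_mul_self _
    have hd : diagonal ((RCLike.ofReal : ℝ → ℝ) ∘ Real.sqrt ∘ hMsd.1.eigenvalues) *
        diagonal ((RCLike.ofReal : ℝ → ℝ) ∘ Real.sqrt ∘ hMsd.1.eigenvalues) =
        diagonal ((RCLike.ofReal : ℝ → ℝ) ∘ hMsd.1.eigenvalues) := by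
      rw [diagonal_mul_diagonal]
      congr 1; funext i
      simp [Real.mul_self_sqrt (hMsd.eigenvalues_nonneg i)]
    rw [hS]
    conv_rhs => rw [hspec]
    simp only [Matrix.mul_assoc]
    rw [← Matrix.mul_assoc (star _ : Matrix (Fin p) (Fin p) ℝ) _ _, hu, Matrix.one_mul,
      ← Matrix.mul_assoc _ _ (star _ : Matrix (Fin p) (Fin p) ℝ), hd]
  have hdetM : (0:ℝ) < M.det := hM.det_pos
  have hdetS : IsUnit S.det := by
    have : S.det * S.det = M.det := by rw [← Matrix.det_mul, hSS]
    have hne : S.det ≠ 0 := by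
      intro h0; rw [h0, mul_zero] at this; exact hdetM.ne' this.symm
    exact isUnit_iff_ne_zero.mpr hne
  have hTS : S⁻¹ * S = 1 := Matrix.nonsing_inv_mul S hdetS
  have hST : S * S⁻¹ = 1 := Matrix.mul_nonsing_inv S hdetS
  set T : Matrix (Fin p) (Fin p) ℝ := S⁻¹ with hTdef
  have hTinv : T = invSqrt M := by rw [hTdef, invSqrt, hSdef]
  have hSt : Sᵀ = S := by
    rw [← Matrix.conjTranspose_eq_transpose_of_trivial]
    exact hSsd.1
  have hTt : Tᵀ = T := by
    rw [hTdef, Matrix.transpose_nonsing_inv, hSt]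
  set E : Matrix (Fin p) (Fin p) ℝ := T * (HS - H) * T with hEdef
  have hTMT : T * M * T = 1 := by
    rw [← hSS, ← Matrix.mul_assoc T S S, hTS, Matrix.one_mul, hST]
  have hTNT : T * (HS + ρ • 1) * T = E + 1 := by
    have : HS + ρ • (1 : Matrix (Fin p) (Fin p) ℝ) = (HS - H) + M := by
      rw [hMdef]; abel
    rw [this, Matrix.mul_add, Matrix.add_mul, hTMT, hEdef]
  have hEbound : ∀ y : Fin p → ℝ, |y ⬝ᵥ E *ᵥ y| ≤ ζ / (1 + ζ) * (y ⬝ᵥ y) := by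
    intro y
    have hdp : y ⬝ᵥ y = ∑ i, y i ^ 2 := by
      simp [dotProduct, sq]
    rw [hdp]
    have hεnn : (0:ℝ) ≤ ζ / (1 + ζ) := by positivity
    have := quad_abs_le E (ζ / (1 + ζ)) hεnn (by rw [hEdef, hTinv]; exact hnorm) y
    exact this
  -- quadratic form transfer
  have key : ∀ x : Fin p → ℝ, ∃ y : Fin p → ℝ,
      x ⬝ᵥ (M *ᵥ x) = y ⬝ᵥ y ∧
      x ⬝ᵥ ((HS + ρ • 1) *ᵥ x) = y ⬝ᵥ y + y ⬝ᵥ (E *ᵥ y) := by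
    intro x
    refine ⟨S *ᵥ x, ?_, ?_⟩
    · rw [← hSS, ← Matrix.mulVec_mulVec, Matrix.dotProduct_mulVec x S,
        ← Matrix.mulVec_transpose, hSt]
    · have hx : x = T *ᵥ (S *ᵥ x) := by
        rw [Matrix.mulVec_mulVec, hTS, Matrix.one_mulVec]
      calc x ⬝ᵥ ((HS + ρ • 1) *ᵥ x)
          = (T *ᵥ (S *ᵥ x)) ⬝ᵥ ((HS + ρ • 1) *ᵥ (T *ᵥ (S *ᵥ x))) := by rw [← hx]
        _ = (S *ᵥ x) ⬝ᵥ ((T * (HS + ρ • 1) * T) *ᵥ (S *ᵥ x)) := conj_dot T _ hTt _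
        _ = (S *ᵥ x) ⬝ᵥ ((E + 1) *ᵥ (S *ᵥ x)) := by rw [hTNT]
        _ = (S *ᵥ x) ⬝ᵥ (S *ᵥ x) + (S *ᵥ x) ⬝ᵥ (E *ᵥ (S *ᵥ x)) := by
            rw [Matrix.add_mulVec, dotProduct_add, Matrix.one_mulVec]; ring
  have hermM : M.IsHermitian := hM.1
  have hermN : (HS + ρ • (1:Matrix (Fin p) (Fin p) ℝ)).IsHermitian := hHS.1.add h1herm
  constructor
  · refine PosSemidef.of_dotProduct_mulVec_nonneg ?_ (fun x => ?_)
    · show (M - (1 - ζ) • (HS + ρ • 1)).IsHermitian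
      have : ((1 - ζ) • (HS + ρ • (1:Matrix (Fin p) (Fin p) ℝ))).IsHermitian := by
        unfold Matrix.IsHermitian at hermN ⊢
        rw [Matrix.conjTranspose_smul, hermN]
        simp
      exact hermM.sub this
    · obtain ⟨y, hA, hB⟩ := key x
      have hE := hEbound y
      have hyy : 0 ≤ y ⬝ᵥ y := by
        have : y ⬝ᵥ y = ∑ i, y i ^ 2 := by simp [dotProduct, sq]
        rw [this]; exact Finset.sum_nonneg fun i _ => sq_nonneg _
      rw [star_trivial, Matrix.sub_mulVec, dotProduct_sub, hA,
        Matrix.smul_mulVec, dotProduct_smul, hB, smul_eq_mul]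
      rw [abs_le] at hE
      have h1ζ : 0 < 1 + ζ := by linarith
      have hq : y ⬝ᵥ (E *ᵥ y) ≤ ζ / (1 + ζ) * (y ⬝ᵥ y) := hE.2
      have : ζ / (1 + ζ) * (y ⬝ᵥ y) * (1 + ζ) = ζ * (y ⬝ᵥ y) := by field_simp
      nlinarith [hq, hyy]
  · refine PosSemidef.of_dotProduct_mulVec_nonneg ?_ (fun x => ?_)
    · show ((1 + ζ) • (HS + ρ • 1) - M).IsHermitian
      have : ((1 + ζ) • (HS + ρ • (1:Matrix (Fin p) (Fin p) ℝ))).IsHermitian := by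
        unfold Matrix.IsHermitian at hermN ⊢
        rw [Matrix.conjTranspose_smul, hermN]
        simp
      exact this.sub hermM
    · obtain ⟨y, hA, hB⟩ := key x
      have hE := hEbound y
      have hyy : 0 ≤ y ⬝ᵥ y := by
        have : y ⬝ᵥ y = ∑ i, y i ^ 2 := by simp [dotProduct, sq]
        rw [this]; exact Finset.sum_nonneg fun i _ => sq_nonneg _
      rw [star_trivial, Matrix.sub_mulVec, dotProduct_sub, hA,
        Matrix.smul_mulVec, dotProduct_smul, hB, smul_eq_mul]
      rw [abs_le] at hE
      have h1ζ : 0 < 1 + ζ := by linarith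
      have hq : -(ζ / (1 + ζ) * (y ⬝ᵥ y)) ≤ y ⬝ᵥ (E *ᵥ y) := hE.1
      have : ζ / (1 + ζ) * (y ⬝ᵥ y) * (1 + ζ) = ζ * (y ⬝ᵥ y) := by field_simp
      nlinarith [hq, hyy]
end

section
/- Let f : ℝ^p → ℝ be convex and differentiable with minimizer w_⋆, let P be a symmetric positive definite p×p matrix, and let ρ, L_P, σ², η > 0. Fix w_k ∈ ℝ^p and let g be a random vector with E[g] = ∇f(w_k) and E‖g‖²_{P^{-1}} ≤ 4L_P·(f(w_k) − f(w_⋆)) + 2σ²/ρ. Define w_{k+1} = w_k − η P^{-1}g. Then E‖w_{k+1} − w_⋆‖²_P ≤ ‖w_k − w_⋆‖²_P − 2η(1 − 2ηL_P)(f(w_k) − f(w_⋆)) + 2η²σ²/ρ. -/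
open Matrix MeasureTheory

noncomputable def gradVec {p : ℕ} (f : (Fin p → ℝ) → ℝ) (w : Fin p → ℝ) : Fin p → ℝ :=
  fun i => fderiv ℝ f w (Pi.single i 1)

lemma grad_ineq {p : ℕ} (f : (Fin p → ℝ) → ℝ) (hdiff : Differentiable ℝ f)
    (hconv : ConvexOn ℝ Set.univ f) (x y : Fin p → ℝ) :
    (fderiv ℝ f x) (y - x) ≤ f y - f x := by
  set φ : ℝ → ℝ := fun t => f (x + t • (y - x)) with hφ
  have hline : ∀ t : ℝ, HasDerivAt (fun s : ℝ => x + s • (y - x)) (y - x) t := by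
    intro t
    simpa using ((hasDerivAt_id t).smul_const (y - x)).const_add x
  have hder : HasDerivAt φ ((fderiv ℝ f x) (y - x)) 0 := by
    have := ((hdiff (x + (0:ℝ) • (y - x))).hasFDerivAt.comp_hasDerivAt 0 (hline 0))
    simpa [hφ, Function.comp_def] using this
  have hconvφ : ConvexOn ℝ Set.univ φ := by
    have h2 := hconv.comp_affineMap (AffineMap.lineMap x y : ℝ →ᵃ[ℝ] (Fin p → ℝ))
    have heq : φ = f ∘ (AffineMap.lineMap x y : ℝ →ᵃ[ℝ] (Fin p → ℝ)) := by
      funext t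
      simp [hφ, AffineMap.lineMap_apply, add_comm]
    rw [heq]
    simpa using h2
  have := hconvφ.le_slope_of_hasDerivAt (Set.mem_univ (0:ℝ)) (Set.mem_univ (1:ℝ)) one_pos hder
  simp [slope_def_field, hφ, map_sub] at this ⊢
  linarith

lemma fderiv_eq_dot {p : ℕ} (f : (Fin p → ℝ) → ℝ) (x v : Fin p → ℝ) :
    (fderiv ℝ f x) v = v ⬝ᵥ gradVec f x := by
  have hv : v = ∑ i, v i • (Pi.single i 1 : Fin p → ℝ) := by
    funext j
    simp [Finset.sum_apply, Pi.single_apply]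
  nth_rewrite 1 [hv]
  rw [map_sum]
  simp [gradVec, dotProduct, _root_.map_smul, smul_eq_mul]

/-- **One-step descent bound for preconditioned SGD.**
Let `f` be convex and differentiable with minimizer `w⋆`, `P ≻ 0`, and
`ρ, L_P, σ², η > 0`.  Let `g` be a random vector with `E[g] = ∇f(w_k)` and
`E‖g‖²_{P⁻¹} ≤ 4L_P(f(w_k) − f(w⋆)) + 2σ²/ρ`, and set `w_{k+1} = w_k − ηP⁻¹g`.  Then
`E‖w_{k+1} − w⋆‖²_P ≤ ‖w_k − w⋆‖²_P − 2η(1 − 2ηL_P)(f(w_k) − f(w⋆)) + 2η²σ²/ρ`. -/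
theorem sketchySGD_one_step {p : ℕ}
    (f : (Fin p → ℝ) → ℝ) (hdiff : Differentiable ℝ f)
    (hconv : ConvexOn ℝ Set.univ f)
    (wstar : Fin p → ℝ) (hmin : ∀ w, f wstar ≤ f w)
    (P : Matrix (Fin p) (Fin p) ℝ) (hP : P.PosDef)
    (ρ LP σ2 η : ℝ) (hρ : 0 < ρ) (hLP : 0 < LP) (hσ : 0 < σ2) (hη : 0 < η)
    (wk : Fin p → ℝ)
    {Ω : Type} [MeasurableSpace Ω] (μ : Measure Ω) [IsProbabilityMeasure μ]
    (g : Ω → Fin p → ℝ) (hgmeas : Measurable g) (hgint : Integrable g μ)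
    (hg2int : Integrable (fun ω => g ω ⬝ᵥ (P⁻¹).mulVec (g ω)) μ)
    (hmean : (∫ ω, g ω ∂μ) = gradVec f wk)
    (hvar : (∫ ω, g ω ⬝ᵥ (P⁻¹).mulVec (g ω) ∂μ) ≤
      4 * LP * (f wk - f wstar) + 2 * σ2 / ρ) :
    (∫ ω, (wk - η • (P⁻¹).mulVec (g ω) - wstar) ⬝ᵥ
        P.mulVec (wk - η • (P⁻¹).mulVec (g ω) - wstar) ∂μ)
      ≤ (wk - wstar) ⬝ᵥ P.mulVec (wk - wstar)
        - 2 * η * (1 - 2 * η * LP) * (f wk - f wstar) + 2 * η ^ 2 * σ2 / ρ := by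
  set v : Fin p → ℝ := wk - wstar with hv
  have hPinv : ∀ x : Fin p → ℝ, P.mulVec ((P⁻¹).mulVec x) = x := by
    intro x
    rw [Matrix.mulVec_mulVec, Matrix.mul_nonsing_inv _ hP.det_pos.ne'.isUnit, Matrix.one_mulVec]
  have hsym : ∀ x y : Fin p → ℝ, x ⬝ᵥ P.mulVec y = y ⬝ᵥ P.mulVec x := by
    intro x y
    rw [Matrix.dotProduct_mulVec, ← Matrix.mulVec_transpose]
    nth_rewrite 1 [show Pᵀ = P from by simpa using hP.isHermitian.eq]
    rw [dotProduct_comm]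
  -- pointwise expansion
  have hpt : ∀ ω, (wk - η • (P⁻¹).mulVec (g ω) - wstar) ⬝ᵥ
      P.mulVec (wk - η • (P⁻¹).mulVec (g ω) - wstar)
      = v ⬝ᵥ P.mulVec v - 2 * η * (v ⬝ᵥ g ω)
        + η ^ 2 * (g ω ⬝ᵥ (P⁻¹).mulVec (g ω)) := by
    intro ω
    have h1 : wk - η • (P⁻¹).mulVec (g ω) - wstar = v - η • (P⁻¹).mulVec (g ω) := by
      funext i; simp [hv]; ring
    have h2 : v ⬝ᵥ P.mulVec (η • (P⁻¹).mulVec (g ω)) = η * (v ⬝ᵥ g ω) := by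
      rw [Matrix.mulVec_smul, dotProduct_smul, hPinv]
      simp [smul_eq_mul]
    have h3 : (η • (P⁻¹).mulVec (g ω)) ⬝ᵥ P.mulVec v = η * (v ⬝ᵥ g ω) := by
      rw [smul_dotProduct, hsym, hPinv]
      simp [smul_eq_mul]
    have h4 : (η • (P⁻¹).mulVec (g ω)) ⬝ᵥ P.mulVec (η • (P⁻¹).mulVec (g ω))
        = η ^ 2 * (g ω ⬝ᵥ (P⁻¹).mulVec (g ω)) := by
      rw [Matrix.mulVec_smul, smul_dotProduct, dotProduct_smul, hPinv,
        dotProduct_comm]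
      simp [smul_eq_mul]; ring
    rw [h1, sub_dotProduct, Matrix.mulVec_sub, dotProduct_sub,
      dotProduct_sub, h2, h3, h4]
    ring
  -- integrability of v ⬝ᵥ g ω
  set Llin : (Fin p → ℝ) →ₗ[ℝ] ℝ :=
    { toFun := fun w => v ⬝ᵥ w,
      map_add' := by intro a b; simp [dotProduct_add],
      map_smul' := by intro c a; simp [dotProduct_smul] } with hLlin
  set L : (Fin p → ℝ) →L[ℝ] ℝ := LinearMap.toContinuousLinearMap Llin with hL
  have hLapp : ∀ w, L w = v ⬝ᵥ w := fun w => rfl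
  have hLg : Integrable (fun ω => v ⬝ᵥ g ω) μ := by
    have := L.integrable_comp hgint
    simpa [Function.comp, hLapp] using this
  have hintL : (∫ ω, v ⬝ᵥ g ω ∂μ) = v ⬝ᵥ gradVec f wk := by
    have h := L.integral_comp_comm hgint
    simp only [hLapp] at h
    rw [h, hmean]
  -- integral computation
  have hsplit : (∫ ω, (wk - η • (P⁻¹).mulVec (g ω) - wstar) ⬝ᵥ
      P.mulVec (wk - η • (P⁻¹).mulVec (g ω) - wstar) ∂μ)
      = v ⬝ᵥ P.mulVec v - 2 * η * (v ⬝ᵥ gradVec f wk)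
        + η ^ 2 * (∫ ω, g ω ⬝ᵥ (P⁻¹).mulVec (g ω) ∂μ) := by
    simp_rw [hpt]
    rw [integral_add, integral_sub, integral_const, integral_const_mul, integral_const_mul,
      hintL]
    · simp
    · exact integrable_const _
    · exact hLg.const_mul _
    · exact (integrable_const _).sub (hLg.const_mul _)
    · exact hg2int.const_mul _
  rw [hsplit]
  -- convexity bound : f wk - f wstar ≤ v ⬝ᵥ gradVec f wk
  have hgrad : f wk - f wstar ≤ v ⬝ᵥ gradVec f wk := by
    have h := grad_ineq f hdiff hconv wk wstar
    rw [fderiv_eq_dot] at h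
    have hneg : (wstar - wk) ⬝ᵥ gradVec f wk = -(v ⬝ᵥ gradVec f wk) := by
      rw [hv, ← neg_dotProduct, neg_sub]
    rw [hneg] at h
    linarith
  have hD : 0 ≤ f wk - f wstar := by linarith [hmin wk]
  have h5 : η ^ 2 * (∫ ω, g ω ⬝ᵥ (P⁻¹).mulVec (g ω) ∂μ)
      ≤ η ^ 2 * (4 * LP * (f wk - f wstar) + 2 * σ2 / ρ) :=
    mul_le_mul_of_nonneg_left hvar (sq_nonneg η)
  have h6 : 2 * η * (f wk - f wstar) ≤ 2 * η * (v ⬝ᵥ gradVec f wk) := by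
    have := mul_le_mul_of_nonneg_left hgrad (le_of_lt hη)
    linarith
  ring_nf at h5 h6 ⊢
  linarith [h5, h6]
end

section
/- Let f : ℝ^p → ℝ be convex and differentiable with minimizer w_⋆, let ρ, L_P, σ², γ̂_ℓ, ε > 0. Consider a staged stochastic iteration: in each stage s, a symmetric positive definite matrix P^{(s)} satisfies f(w) − f(w_⋆) ≥ (γ̂_ℓ/2)‖w − w_⋆‖²_{P^{(s)}} for all w, and the iterates are w_{k+1}^{(s)} = w_k^{(s)} − η (P^{(s)})^{-1}g_k^{(s)} for k = 0,…,m−1, where conditionally E_k[g_k^{(s)}] = ∇f(w_k^{(s)}) and E_k‖g_k^{(s)}‖²_{(P^{(s)})^{-1}} ≤ 4L_P·(f(w_k^{(s)}) − f(w_⋆)) + 2σ²/ρ; the next stage starts at ŵ^{(s+1)} = (1/m)∑_{k=0}^{m−1}w_k^{(s)}, with w_0^{(1)} = w_0. If η = min{1/(4L_P), ερ/(8σ²)}, m = 16(L_P + 2σ²/(ερ))/γ̂_ℓ, and s = 2·log(2(f(w_0) − f(w_⋆))/ε), then E[f(ŵ^{(s)}) − f(w_⋆)] ≤ ε. -/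
open Matrix MeasureTheory

variable {p : ℕ}

lemma qf_expand {Q : Matrix (Fin p) (Fin p) ℝ} (hQ : Q.PosDef) (η : ℝ) (a b : Fin p → ℝ) :
    (a - η • (Q⁻¹ *ᵥ b)) ⬝ᵥ Q *ᵥ (a - η • (Q⁻¹ *ᵥ b))
      = a ⬝ᵥ Q *ᵥ a - 2 * η * (a ⬝ᵥ b) + η ^ 2 * (b ⬝ᵥ Q⁻¹ *ᵥ b) := by
  have hdet : IsUnit Q.det := isUnit_iff_ne_zero.2 hQ.det_pos.ne'
  have hsym : Qᵀ = Q := by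
    simpa [Matrix.IsHermitian, Matrix.conjTranspose_eq_transpose_of_trivial] using hQ.1
  have hQQi : ∀ v : Fin p → ℝ, Q *ᵥ (Q⁻¹ *ᵥ v) = v := fun v => by
    rw [Matrix.mulVec_mulVec, Matrix.mul_nonsing_inv _ hdet, Matrix.one_mulVec]
  have hcross : (Q⁻¹ *ᵥ b) ⬝ᵥ Q *ᵥ a = a ⬝ᵥ b := by
    rw [Matrix.dotProduct_mulVec, ← Matrix.mulVec_transpose, hsym, hQQi, dotProduct_comm]
  have hcross2 : a ⬝ᵥ Q *ᵥ (η • (Q⁻¹ *ᵥ b)) = η * (a ⬝ᵥ b) := by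
    rw [Matrix.mulVec_smul, dotProduct_smul, hQQi]; rfl
  have hq2 : (Q⁻¹ *ᵥ b) ⬝ᵥ Q *ᵥ (Q⁻¹ *ᵥ b) = b ⬝ᵥ Q⁻¹ *ᵥ b := by
    rw [hQQi, dotProduct_comm]
  rw [Matrix.mulVec_sub, sub_dotProduct, dotProduct_sub, dotProduct_sub,
    smul_dotProduct, smul_dotProduct, hcross2]
  simp only [Matrix.mulVec_smul, dotProduct_smul, smul_eq_mul]
  rw [hcross, hq2]
  ring

lemma dot_gradVec (f : (Fin p → ℝ) → ℝ) (x v : Fin p → ℝ) (hd : DifferentiableAt ℝ f x) :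
    v ⬝ᵥ gradVec f x = fderiv ℝ f x v := by
  have hv : v = ∑ i, v i • (Pi.single i 1 : Fin p → ℝ) := by
    funext j
    simp [Pi.single_apply, Finset.sum_apply]
  conv_rhs => rw [hv]
  rw [map_sum]
  simp only [_root_.map_smul, smul_eq_mul]
  rfl

lemma convex_grad_le (f : (Fin p → ℝ) → ℝ) (hdiff : Differentiable ℝ f)
    (hconv : ConvexOn ℝ Set.univ f) (x y : Fin p → ℝ) :
    f x + fderiv ℝ f x (y - x) ≤ f y := by
  set φ : ℝ → ℝ := fun t => f (x + t • (y - x)) with hφ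
  have hφconv : ConvexOn ℝ Set.univ φ := by
    have h := hconv.comp_affineMap (AffineMap.lineMap x y : ℝ →ᵃ[ℝ] (Fin p → ℝ))
    have he : (f ∘ (AffineMap.lineMap x y : ℝ →ᵃ[ℝ] (Fin p → ℝ))) = φ := by
      funext t
      simp [hφ, AffineMap.lineMap_apply, add_comm]
    rw [he] at h
    simpa using h
  have hderiv : HasDerivAt φ (fderiv ℝ f x (y - x)) 0 := by
    have h1 : HasDerivAt (fun t : ℝ => x + t • (y - x)) (y - x) 0 := by
      simpa using ((hasDerivAt_id (0:ℝ)).smul_const (y - x)).const_add x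
    have h2 := (hdiff x).hasFDerivAt
    have h3 : HasFDerivAt f (fderiv ℝ f x) (x + (0:ℝ) • (y - x)) := by simpa using h2
    simpa [hφ, Function.comp_def] using h3.comp_hasDerivAt 0 h1
  have := hφconv.le_slope_of_hasDerivAt (Set.mem_univ (0:ℝ)) (Set.mem_univ (1:ℝ))
    zero_lt_one hderiv
  rw [slope_def_field] at this
  have hφ1 : φ 1 = f y := by simp [hφ]
  have hφ0 : φ 0 = f x := by simp [hφ]
  rw [hφ1, hφ0] at this
  rw [sub_zero, div_one] at this
  linarith

lemma condexp_apply {Ω : Type} {m m0 : MeasurableSpace Ω} (hm : m ≤ m0) (μ : Measure Ω)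
    [IsProbabilityMeasure μ] {X : Ω → Fin p → ℝ} (hX : Integrable X μ) (i : Fin p) :
    (μ[fun ω => X ω i | m]) =ᵐ[μ] fun ω => (μ[X|m]) ω i := by
  haveI : SigmaFinite (μ.trim hm) := by
    exact IsFiniteMeasure.toSigmaFinite _
  set L : (Fin p → ℝ) →L[ℝ] ℝ := ContinuousLinearMap.proj i with hL
  have hXi : Integrable (fun ω => X ω i) μ := L.integrable_comp hX
  refine (ae_eq_condExp_of_forall_setIntegral_eq hm hXi ?_ ?_ ?_).symm
  · intro s _ _
    exact (L.integrable_comp integrable_condExp).integrableOn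
  · intro s hs hμs
    have h1 : ∫ ω in s, (μ[X|m]) ω i ∂μ = L (∫ ω in s, (μ[X|m]) ω ∂μ) :=
      L.integral_comp_comm integrable_condExp.integrableOn
    have h2 : ∫ ω in s, X ω i ∂μ = L (∫ ω in s, X ω ∂μ) :=
      L.integral_comp_comm hX.integrableOn
    rw [h1, h2, setIntegral_condExp hm hX hs]
  · exact StronglyMeasurable.aestronglyMeasurable
      (L.continuous.comp_stronglyMeasurable stronglyMeasurable_condExp)


lemma qf_nonneg {Q : Matrix (Fin p) (Fin p) ℝ} (hQ : Q.PosSemidef) (v : Fin p → ℝ) :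
    0 ≤ v ⬝ᵥ Q.mulVec v := by simpa using hQ.dotProduct_mulVec_nonneg v

lemma norm_le_sqrt_dot (u : Fin p → ℝ) : ‖u‖ ≤ Real.sqrt (u ⬝ᵥ u) := by
  refine (pi_norm_le_iff_of_nonneg (Real.sqrt_nonneg _)).2 fun i => ?_
  rw [Real.norm_eq_abs, ← Real.sqrt_sq_eq_abs]
  refine Real.sqrt_le_sqrt ?_
  simpa [dotProduct, sq] using
    Finset.single_le_sum (f := fun j => u j * u j) (fun j _ => mul_self_nonneg _) (Finset.mem_univ i)

open scoped MatrixOrder in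
lemma posdef_coercive {Q : Matrix (Fin p) (Fin p) ℝ} (hQ : Q.PosDef) :
    ∃ C : ℝ, 0 ≤ C ∧ ∀ (v : Fin p → ℝ) (i : Fin p),
      |v i| ≤ C * Real.sqrt (v ⬝ᵥ Q.mulVec v) := by
  set S := CFC.sqrt Q with hSdef
  have hS2 : S * S = Q := CFC.sqrt_mul_sqrt_self Q hQ.posSemidef.nonneg
  have hSsym : Sᵀ = S := by
    have h := (CFC.sqrt_nonneg Q).posSemidef.1
    simpa [Matrix.IsHermitian, Matrix.conjTranspose_eq_transpose_of_trivial] using h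
  have hdet : IsUnit S.det := by
    have h1 : S.det * S.det = Q.det := by rw [← Matrix.det_mul, hS2]
    have h2 : (0:ℝ) < Q.det := hQ.det_pos
    have : S.det ≠ 0 := by intro h; rw [h, mul_zero] at h1; linarith
    exact isUnit_iff_ne_zero.2 this
  set L := LinearMap.toContinuousLinearMap (Matrix.mulVecLin S⁻¹) with hL
  refine ⟨‖L‖, norm_nonneg _, fun v i => ?_⟩
  have hv : v = S⁻¹ *ᵥ (S *ᵥ v) := by
    rw [Matrix.mulVec_mulVec, Matrix.nonsing_inv_mul _ hdet, Matrix.one_mulVec]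
  have h1 : |v i| ≤ ‖v‖ := by
    simpa [Real.norm_eq_abs] using norm_le_pi_norm v i
  have h2 : ‖v‖ ≤ ‖L‖ * ‖S *ᵥ v‖ := by
    calc ‖v‖ = ‖L (S *ᵥ v)‖ := by rw [hL]; simp [Matrix.mulVecLin_apply, ← hv]
    _ ≤ ‖L‖ * ‖S *ᵥ v‖ := L.le_opNorm _
  have h3 : (S *ᵥ v) ⬝ᵥ (S *ᵥ v) = v ⬝ᵥ Q *ᵥ v := by
    rw [Matrix.dotProduct_mulVec]
    have : (S *ᵥ v) ᵥ* S = Q *ᵥ v := by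
      rw [← Matrix.mulVec_transpose, Matrix.mulVec_mulVec, hSsym, hS2]
    rw [this, dotProduct_comm]
  have h4 : ‖S *ᵥ v‖ ≤ Real.sqrt (v ⬝ᵥ Q *ᵥ v) := by
    rw [← h3]; exact norm_le_sqrt_dot _
  calc |v i| ≤ ‖v‖ := h1
    _ ≤ ‖L‖ * ‖S *ᵥ v‖ := h2
    _ ≤ ‖L‖ * Real.sqrt (v ⬝ᵥ Q *ᵥ v) := by
        exact mul_le_mul_of_nonneg_left h4 (norm_nonneg _)


set_option maxHeartbeats 2000000 in
/-- **SketchySGD strongly convex convergence (staged version).**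
Let `f` be convex and differentiable with minimizer `w⋆`, `ρ, L_P, σ², γ̂_ℓ, ε > 0`.
In each stage `s` a positive definite `P⁽ˢ⁾` satisfies the preconditioned strong
convexity bound `f(w) − f(w⋆) ≥ (γ̂_ℓ/2)‖w − w⋆‖²_{P⁽ˢ⁾}`, and the inner iterates are
`w_{k+1}⁽ˢ⁾ = w_k⁽ˢ⁾ − η(P⁽ˢ⁾)⁻¹g_k⁽ˢ⁾` with conditionally unbiased `g_k⁽ˢ⁾` whose
conditional second moment is `≤ 4L_P(f(w_k⁽ˢ⁾) − f(w⋆)) + 2σ²/ρ`; the next stage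
starts at the average of the previous stage.  With `η = min{1/(4L_P), ερ/(8σ²)}`,
`m ≥ 16(L_P + 2σ²/(ερ))/γ̂_ℓ` inner iterations, and
`S ≥ 2·log(2(f(w₀) − f(w⋆))/ε)` stages, the output `ŵ⁽ˢ⁾` satisfies
`E[f(ŵ⁽ˢ⁾) − f(w⋆)] ≤ ε`. -/
theorem sketchySGD_strongly_convex_convergence {p : ℕ}
    (f : (Fin p → ℝ) → ℝ) (hdiff : Differentiable ℝ f)
    (hconv : ConvexOn ℝ Set.univ f)
    (wstar : Fin p → ℝ) (hmin : ∀ w, f wstar ≤ f w)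
    (ρ LP σ2 γℓ ε : ℝ) (hρ : 0 < ρ) (hLP : 0 < LP) (hσ : 0 < σ2)
    (hγ : 0 < γℓ) (hε : 0 < ε)
    (P : ℕ → Matrix (Fin p) (Fin p) ℝ) (hP : ∀ s, (P s).PosDef)
    (hlow : ∀ (s : ℕ) (w : Fin p → ℝ),
      f w - f wstar ≥ γℓ / 2 * ((w - wstar) ⬝ᵥ (P s).mulVec (w - wstar)))
    (m S : ℕ) (hm : 0 < m) (hS : 0 < S)
    (hm' : (m : ℝ) ≥ 16 * (LP + 2 * σ2 / (ε * ρ)) / γℓ)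
    {Ω : Type} {m0 : MeasurableSpace Ω} (μ : Measure Ω) [IsProbabilityMeasure μ]
    (ℱ : ℕ → MeasurableSpace Ω) (hℱ : ∀ t, ℱ t ≤ m0) (hℱmono : Monotone ℱ)
    (w g : ℕ → ℕ → Ω → Fin p → ℝ)
    (w0 : Fin p → ℝ) (hw0 : w 0 0 = fun _ => w0)
    (hSlog : (S : ℝ) ≥ 2 * Real.log (2 * (f w0 - f wstar) / ε))
    (hadapt : ∀ s k, StronglyMeasurable[ℱ (s * m + k)] (w s k))
    (hgint : ∀ s k, Integrable (g s k) μ)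
    (hg2int : ∀ s k,
      Integrable (fun ω => g s k ω ⬝ᵥ ((P s)⁻¹).mulVec (g s k ω)) μ)
    (hfint : ∀ s k, Integrable (fun ω => f (w s k ω)) μ)
    (η : ℝ) (hη : η = min (1 / (4 * LP)) (ε * ρ / (8 * σ2)))
    (hupd : ∀ s k ω, w s (k + 1) ω = w s k ω - η • ((P s)⁻¹).mulVec (g s k ω))
    (hstage : ∀ s ω, w (s + 1) 0 ω = (m : ℝ)⁻¹ • ∑ k ∈ Finset.range m, w s k ω)
    (hmean : ∀ s k, μ[g s k|ℱ (s * m + k)] =ᵐ[μ] fun ω => gradVec f (w s k ω))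
    (hvar : ∀ s k, ∀ᵐ ω ∂μ,
      (μ[fun ω' => g s k ω' ⬝ᵥ ((P s)⁻¹).mulVec (g s k ω')|ℱ (s * m + k)]) ω
        ≤ 4 * LP * (f (w s k ω) - f wstar) + 2 * σ2 / ρ) :
    (∫ ω, f (w S 0 ω) ∂μ) - f wstar ≤ ε := by
  -- step size facts
  have hA : (0:ℝ) < 4 * LP := by linarith
  have hB : (0:ℝ) < 8 * σ2 / (ε * ρ) := by positivity
  have hηeq : η = min (1 / (4 * LP)) (1 / (8 * σ2 / (ε * ρ))) := by
    rw [hη]; congr 1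
    rw [one_div, inv_div]
  have hη0 : 0 < η := by
    rw [hηeq]; exact lt_min (by positivity) (by positivity)
  have hηA : η * (4 * LP) ≤ 1 := by
    have h1 : η ≤ 1 / (4 * LP) := hηeq ▸ min_le_left _ _
    calc η * (4 * LP) ≤ (1 / (4 * LP)) * (4 * LP) := by
          exact mul_le_mul_of_nonneg_right h1 hA.le
      _ = 1 := by field_simp
  have hηB : η * (8 * σ2 / (ε * ρ)) ≤ 1 := by
    have h1 : η ≤ 1 / (8 * σ2 / (ε * ρ)) := hηeq ▸ min_le_right _ _
    calc η * (8 * σ2 / (ε * ρ)) ≤ (1 / (8 * σ2 / (ε * ρ))) * (8 * σ2 / (ε * ρ)) := by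
          exact mul_le_mul_of_nonneg_right h1 hB.le
      _ = 1 := by field_simp
  have hησ : η * (2 * σ2 / ρ) ≤ ε / 4 := by
    have h2 : η * (8 * σ2 / (ε * ρ)) * (ε / 4) ≤ ε / 4 := by
      have := mul_le_mul_of_nonneg_right hηB (by positivity : (0:ℝ) ≤ ε / 4)
      linarith
    have h3 : η * (8 * σ2 / (ε * ρ)) * (ε / 4) = η * (2 * σ2 / ρ) := by
      field_simp; ring
    linarith [h3 ▸ h2]
  have hηlb : 1 / (4 * LP + 8 * σ2 / (ε * ρ)) ≤ η := by
    rw [hηeq]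
    refine le_min ?_ ?_
    · apply one_div_le_one_div_of_le hA; linarith
    · apply one_div_le_one_div_of_le hB; linarith
  have hγηm : 4 ≤ γℓ * η * m := by
    have hsum : (0:ℝ) < 4 * LP + 8 * σ2 / (ε * ρ) := by linarith
    have hm2 : (m:ℝ) ≥ 4 * (4 * LP + 8 * σ2 / (ε * ρ)) / γℓ := by
      have : 16 * (LP + 2 * σ2 / (ε * ρ)) = 4 * (4 * LP + 8 * σ2 / (ε * ρ)) := by ring
      rw [← this]; exact hm'
    have h1 : γℓ * (m:ℝ) ≥ 4 * (4 * LP + 8 * σ2 / (ε * ρ)) := by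
      have := mul_le_mul_of_nonneg_left hm2 hγ.le
      calc 4 * (4 * LP + 8 * σ2 / (ε * ρ))
          = γℓ * (4 * (4 * LP + 8 * σ2 / (ε * ρ)) / γℓ) := by field_simp
        _ ≤ γℓ * m := this
    calc (4:ℝ) = (4 * (4 * LP + 8 * σ2 / (ε * ρ))) * (1 / (4 * LP + 8 * σ2 / (ε * ρ))) := by
          field_simp
      _ ≤ (γℓ * m) * η := by
          apply mul_le_mul h1 hηlb (by positivity) (by positivity)
      _ = γℓ * η * m := by ring
  -- nonnegativity of stage gaps
  have hFnonneg : ∀ s k, 0 ≤ (∫ ω, f (w s k ω) ∂μ) - f wstar := by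
    intro s k
    have h1 : (∫ ω, f wstar ∂μ) ≤ ∫ ω, f (w s k ω) ∂μ :=
      integral_mono (integrable_const _) (hfint s k) fun ω => hmin _
    simp only [integral_const, probReal_univ, one_smul] at h1
    linarith
  -- quadratic form integrability from the strong convexity lower bound
  have hcontqf : ∀ (Q : Matrix (Fin p) (Fin p) ℝ),
      Continuous (fun v : Fin p → ℝ => v ⬝ᵥ Q *ᵥ v) := by
    intro Q
    simp only [Matrix.mulVec, dotProduct]
    apply continuous_finset_sum
    intro i _
    exact (continuous_apply i).mul
      ((continuous_finset_sum _ fun j _ => (continuous_const.mul (continuous_apply j))))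
  have hwSM : ∀ s k, AEStronglyMeasurable (w s k) μ := fun s k =>
    ((hadapt s k).mono (hℱ _)).aestronglyMeasurable
  have haSM : ∀ s k, AEStronglyMeasurable (fun ω => w s k ω - wstar) μ := fun s k =>
    (hwSM s k).sub aestronglyMeasurable_const
  have hqfint : ∀ s k,
      Integrable (fun ω => (w s k ω - wstar) ⬝ᵥ (P s) *ᵥ (w s k ω - wstar)) μ := by
    intro s k
    refine Integrable.mono' (((hfint s k).sub (integrable_const (f wstar))).const_mul (2 / γℓ))
      ((hcontqf (P s)).comp_aestronglyMeasurable (haSM s k)) ?_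
    filter_upwards with ω
    have h1 := hlow s (w s k ω)
    have h2 : 0 ≤ (w s k ω - wstar) ⬝ᵥ (P s) *ᵥ (w s k ω - wstar) :=
      qf_nonneg (hP s).posSemidef _
    rw [Real.norm_eq_abs, abs_of_nonneg h2]
    rw [ge_iff_le] at h1
    calc (w s k ω - wstar) ⬝ᵥ (P s) *ᵥ (w s k ω - wstar)
        = (2 / γℓ) * (γℓ / 2 * ((w s k ω - wstar) ⬝ᵥ (P s) *ᵥ (w s k ω - wstar))) := by
          rw [← mul_assoc]
          rw [show (2 / γℓ) * (γℓ / 2) = 1 by field_simp, one_mul]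
      _ ≤ 2 / γℓ * (f (w s k ω) - f wstar) := by
          apply mul_le_mul_of_nonneg_left h1 (by positivity)
  -- the key one-stage contraction
  have key : ∀ s, ((∫ ω, f (w (s+1) 0 ω) ∂μ) - f wstar)
      ≤ ((∫ ω, f (w s 0 ω) ∂μ) - f wstar) / 2 + ε / 4 := by
    intro s
    set Q := P s with hQdef
    have hQ : Q.PosDef := hP s
    have hQi : Q⁻¹.PosDef := hQ.inv
    obtain ⟨C₁, hC₁, hbd1⟩ := posdef_coercive hQ
    obtain ⟨C₂, hC₂, hbd2⟩ := posdef_coercive hQi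
    set F : ℕ → ℝ := fun k => (∫ ω, f (w s k ω) ∂μ) - f wstar with hFdef
    set C : ℕ → ℝ := fun k =>
      ∫ ω, (w s k ω - wstar) ⬝ᵥ Q *ᵥ (w s k ω - wstar) ∂μ with hCdef
    have hFnn : ∀ k, 0 ≤ F k := fun k => hFnonneg s k
    have hCnn : ∀ k, 0 ≤ C k := fun k =>
      integral_nonneg fun ω => qf_nonneg hQ.posSemidef _
    -- single inner-step inequality
    have step : ∀ k, C (k+1) ≤ C k - η * F k + η * (ε/4) := by
      intro k
      set ℱk := ℱ (s * m + k) with hℱk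
      -- coordinate integrability of products
      have hgiInt : ∀ i : Fin p, Integrable (fun ω => g s k ω i) μ := fun i =>
        (ContinuousLinearMap.proj (R := ℝ) (φ := fun _ : Fin p => ℝ) i).integrable_comp
          (hgint s k)
      have haiSM : ∀ i : Fin p, StronglyMeasurable[ℱk] (fun ω => w s k ω i - wstar i) :=
        fun i => (((continuous_apply i).comp_stronglyMeasurable (hadapt s k)).sub
          stronglyMeasurable_const)
      have hprodInt : ∀ i : Fin p,
          Integrable (fun ω => (w s k ω i - wstar i) * g s k ω i) μ := by
        intro i
        refine Integrable.mono'
          (((hqfint s k).add (hg2int s k)).const_mul (C₁ * C₂ / 2))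
          ((((haiSM i).mono (hℱ _)).aestronglyMeasurable).mul
            ((hgiInt i).aestronglyMeasurable)) ?_
        filter_upwards with ω
        have h1 : |w s k ω i - wstar i|
            ≤ C₁ * Real.sqrt ((w s k ω - wstar) ⬝ᵥ Q *ᵥ (w s k ω - wstar)) := by
          have := hbd1 (w s k ω - wstar) i
          simpa using this
        have h2 : |g s k ω i| ≤ C₂ * Real.sqrt (g s k ω ⬝ᵥ Q⁻¹ *ᵥ g s k ω) := hbd2 _ i
        have hqa : 0 ≤ (w s k ω - wstar) ⬝ᵥ Q *ᵥ (w s k ω - wstar) :=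
          qf_nonneg hQ.posSemidef _
        have hqg : 0 ≤ g s k ω ⬝ᵥ Q⁻¹ *ᵥ g s k ω := qf_nonneg hQi.posSemidef _
        rw [Real.norm_eq_abs, abs_mul]
        calc |w s k ω i - wstar i| * |g s k ω i|
            ≤ (C₁ * Real.sqrt ((w s k ω - wstar) ⬝ᵥ Q *ᵥ (w s k ω - wstar))) *
              (C₂ * Real.sqrt (g s k ω ⬝ᵥ Q⁻¹ *ᵥ g s k ω)) := by
              apply mul_le_mul h1 h2 (abs_nonneg _) (by positivity)
          _ ≤ C₁ * C₂ / 2 *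
              ((w s k ω - wstar) ⬝ᵥ Q *ᵥ (w s k ω - wstar) + g s k ω ⬝ᵥ Q⁻¹ *ᵥ g s k ω) := by
              have hs1 := Real.sq_sqrt hqa
              have hs2 := Real.sq_sqrt hqg
              have hs3 := Real.sqrt_nonneg ((w s k ω - wstar) ⬝ᵥ Q *ᵥ (w s k ω - wstar))
              have hs4 := Real.sqrt_nonneg (g s k ω ⬝ᵥ Q⁻¹ *ᵥ g s k ω)
              nlinarith [sq_nonneg (Real.sqrt ((w s k ω - wstar) ⬝ᵥ Q *ᵥ (w s k ω - wstar))
                - Real.sqrt (g s k ω ⬝ᵥ Q⁻¹ *ᵥ g s k ω)), mul_nonneg hC₁ hC₂]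
      -- conditional expectation computation per coordinate
      have hcondeq : ∀ i : Fin p,
          (μ[fun ω => (w s k ω i - wstar i) * g s k ω i|ℱk]) =ᵐ[μ]
            fun ω => (w s k ω i - wstar i) * gradVec f (w s k ω) i := by
        intro i
        have hpull := condExp_mul_of_stronglyMeasurable_left (μ := μ) (haiSM i)
          (hprodInt i) (hgiInt i)
        have hgi : (μ[fun ω => g s k ω i|ℱk]) =ᵐ[μ] fun ω => gradVec f (w s k ω) i := by
          refine (condexp_apply (hℱ (s * m + k)) μ (hgint s k) i).trans ?_
          filter_upwards [hmean s k] with ω hω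
          exact congrFun hω i
        refine hpull.trans ?_
        filter_upwards [hgi] with ω hω
        simp only [Pi.mul_apply]
        rw [hω]
      have hgradiInt : ∀ i : Fin p,
          Integrable (fun ω => (w s k ω i - wstar i) * gradVec f (w s k ω) i) μ :=
        fun i => integrable_condExp.congr (hcondeq i)
      have hIeq : ∀ i : Fin p,
          ∫ ω, (w s k ω i - wstar i) * g s k ω i ∂μ
            = ∫ ω, (w s k ω i - wstar i) * gradVec f (w s k ω) i ∂μ := by
        intro i
        rw [← integral_condExp (μ := μ) (f := fun ω => (w s k ω i - wstar i) * g s k ω i) (hℱ (s * m + k))]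
        exact integral_congr_ae (hcondeq i)
      -- dot products as sums
      have hcrossInt : Integrable (fun ω => (w s k ω - wstar) ⬝ᵥ g s k ω) μ := by
        have : (fun ω => (w s k ω - wstar) ⬝ᵥ g s k ω)
            = fun ω => ∑ i, (w s k ω i - wstar i) * g s k ω i := by
          funext ω; simp [dotProduct, Pi.sub_apply]
        rw [this]
        exact integrable_finset_sum _ fun i _ => hprodInt i
      have hgradInt : Integrable (fun ω => (w s k ω - wstar) ⬝ᵥ gradVec f (w s k ω)) μ := by
        have : (fun ω => (w s k ω - wstar) ⬝ᵥ gradVec f (w s k ω))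
            = fun ω => ∑ i, (w s k ω i - wstar i) * gradVec f (w s k ω) i := by
          funext ω; simp [dotProduct, Pi.sub_apply]
        rw [this]
        exact integrable_finset_sum _ fun i _ => hgradiInt i
      have hcrossEq : ∫ ω, (w s k ω - wstar) ⬝ᵥ g s k ω ∂μ
          = ∫ ω, (w s k ω - wstar) ⬝ᵥ gradVec f (w s k ω) ∂μ := by
        have e1 : ∫ ω, (w s k ω - wstar) ⬝ᵥ g s k ω ∂μ
            = ∑ i, ∫ ω, (w s k ω i - wstar i) * g s k ω i ∂μ := by
          rw [← integral_finset_sum _ fun i _ => hprodInt i]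
          apply integral_congr_ae
          filter_upwards with ω
          simp [dotProduct, Pi.sub_apply]
        have e2 : ∫ ω, (w s k ω - wstar) ⬝ᵥ gradVec f (w s k ω) ∂μ
            = ∑ i, ∫ ω, (w s k ω i - wstar i) * gradVec f (w s k ω) i ∂μ := by
          rw [← integral_finset_sum _ fun i _ => hgradiInt i]
          apply integral_congr_ae
          filter_upwards with ω
          simp [dotProduct, Pi.sub_apply]
        rw [e1, e2]
        exact Finset.sum_congr rfl fun i _ => hIeq i
      -- the convexity lower bound for the cross term
      have hcrossLB : F k ≤ ∫ ω, (w s k ω - wstar) ⬝ᵥ g s k ω ∂μ := by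
        rw [hcrossEq]
        have hpt : ∀ ω, f (w s k ω) - f wstar
            ≤ (w s k ω - wstar) ⬝ᵥ gradVec f (w s k ω) := by
          intro ω
          have h1 := convex_grad_le f hdiff hconv (w s k ω) wstar
          have h2 : fderiv ℝ f (w s k ω) (wstar - w s k ω)
              = - fderiv ℝ f (w s k ω) (w s k ω - wstar) := by
            rw [← map_neg]; congr 1; abel
          have h3 := dot_gradVec f (w s k ω) (w s k ω - wstar) (hdiff _)
          rw [h3]
          rw [h2] at h1
          linarith
        have hint1 : Integrable (fun ω => f (w s k ω) - f wstar) μ :=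
          (hfint s k).sub (integrable_const _)
        have hmono := integral_mono hint1 hgradInt fun ω => hpt ω
        rw [integral_sub (hfint s k) (integrable_const _)] at hmono
        simpa [hFdef, integral_const, measure_univ] using hmono
      -- second moment bound
      have hquad : ∫ ω, g s k ω ⬝ᵥ Q⁻¹ *ᵥ g s k ω ∂μ ≤ 4 * LP * F k + 2 * σ2 / ρ := by
        rw [← integral_condExp (μ := μ) (f := fun ω => g s k ω ⬝ᵥ Q⁻¹ *ᵥ g s k ω) (hℱ (s * m + k))]
        have hint0 : Integrable (fun ω => f (w s k ω) - f wstar) μ :=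
          (hfint s k).sub (integrable_const _)
        have hint1 : Integrable (fun ω => 4 * LP * (f (w s k ω) - f wstar)) μ :=
          hint0.const_mul (4 * LP)
        have hRHSint : Integrable
            (fun ω => 4 * LP * (f (w s k ω) - f wstar) + 2 * σ2 / ρ) μ :=
          hint1.add (integrable_const _)
        have h1 := integral_mono_ae integrable_condExp hRHSint (hvar s k)
        refine h1.trans ?_
        rw [integral_add hint1 (integrable_const _), integral_const_mul,
          integral_sub (hfint s k) (integrable_const _)]
        simp [hFdef, integral_const, measure_univ]
      -- quadratic expansion
      have hexp : ∀ ω, (w s (k+1) ω - wstar) ⬝ᵥ Q *ᵥ (w s (k+1) ω - wstar)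
          = (w s k ω - wstar) ⬝ᵥ Q *ᵥ (w s k ω - wstar)
            - 2 * η * ((w s k ω - wstar) ⬝ᵥ g s k ω)
            + η ^ 2 * (g s k ω ⬝ᵥ Q⁻¹ *ᵥ g s k ω) := by
        intro ω
        have h1 : w s (k+1) ω - wstar = (w s k ω - wstar) - η • (Q⁻¹ *ᵥ g s k ω) := by
          rw [hupd s k ω]; abel
        rw [h1]
        exact qf_expand hQ η (w s k ω - wstar) (g s k ω)
      have hCexp : C (k+1) = C k - 2 * η * (∫ ω, (w s k ω - wstar) ⬝ᵥ g s k ω ∂μ)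
          + η ^ 2 * (∫ ω, g s k ω ⬝ᵥ Q⁻¹ *ᵥ g s k ω ∂μ) := by
        have e : C (k+1) = ∫ ω, ((w s k ω - wstar) ⬝ᵥ Q *ᵥ (w s k ω - wstar)
            - 2 * η * ((w s k ω - wstar) ⬝ᵥ g s k ω)
            + η ^ 2 * (g s k ω ⬝ᵥ Q⁻¹ *ᵥ g s k ω)) ∂μ := by
          simp only [hCdef]
          exact integral_congr_ae (Filter.Eventually.of_forall hexp)
        have hintc : Integrable (fun ω => 2 * η * ((w s k ω - wstar) ⬝ᵥ g s k ω)) μ :=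
          hcrossInt.const_mul _
        have hintq : Integrable (fun ω => η ^ 2 * (g s k ω ⬝ᵥ Q⁻¹ *ᵥ g s k ω)) μ :=
          (hg2int s k).const_mul _
        have hintsub : Integrable (fun ω => (w s k ω - wstar) ⬝ᵥ Q *ᵥ (w s k ω - wstar)
            - 2 * η * ((w s k ω - wstar) ⬝ᵥ g s k ω)) μ := (hqfint s k).sub hintc
        rw [e, integral_add hintsub hintq, integral_sub (hqfint s k) hintc,
          integral_const_mul, integral_const_mul]
      rw [hCexp]
      have e1 : 2 * η * F k ≤ 2 * η * (∫ ω, (w s k ω - wstar) ⬝ᵥ g s k ω ∂μ) :=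
        mul_le_mul_of_nonneg_left hcrossLB (by positivity)
      have e2 : η ^ 2 * (∫ ω, g s k ω ⬝ᵥ Q⁻¹ *ᵥ g s k ω ∂μ)
          ≤ η ^ 2 * (4 * LP * F k + 2 * σ2 / ρ) :=
        mul_le_mul_of_nonneg_left hquad (by positivity)
      have e3 : η ^ 2 * (4 * LP * F k) ≤ η * F k := by
        have h0 : 0 ≤ η * F k := mul_nonneg hη0.le (hFnn k)
        calc η ^ 2 * (4 * LP * F k) = (η * (4 * LP)) * (η * F k) := by ring
          _ ≤ 1 * (η * F k) := mul_le_mul_of_nonneg_right hηA h0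
          _ = η * F k := one_mul _
      have e4 : η ^ 2 * (2 * σ2 / ρ) ≤ η * (ε / 4) := by
        calc η ^ 2 * (2 * σ2 / ρ) = η * (η * (2 * σ2 / ρ)) := by ring
          _ ≤ η * (ε / 4) := mul_le_mul_of_nonneg_left hησ hη0.le
      have t5 : η ^ 2 * (∫ ω, g s k ω ⬝ᵥ Q⁻¹ *ᵥ g s k ω ∂μ) ≤ η * F k + η * (ε / 4) := by
        refine e2.trans ?_
        calc η ^ 2 * (4 * LP * F k + 2 * σ2 / ρ)
            = η ^ 2 * (4 * LP * F k) + η ^ 2 * (2 * σ2 / ρ) := by ring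
          _ ≤ η * F k + η * (ε / 4) := add_le_add e3 e4
      calc C k - 2 * η * (∫ ω, (w s k ω - wstar) ⬝ᵥ g s k ω ∂μ)
            + η ^ 2 * (∫ ω, g s k ω ⬝ᵥ Q⁻¹ *ᵥ g s k ω ∂μ)
          ≤ C k - 2 * η * F k + (η * F k + η * (ε / 4)) :=
            add_le_add (sub_le_sub_left e1 _) t5
        _ = C k - η * F k + η * (ε/4) := by ring
    -- telescoping
    have tele : ∀ n : ℕ, C n + η * ∑ k ∈ Finset.range n, F k ≤ C 0 + n * (η * (ε/4)) := by
      intro n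
      induction n with
      | zero => simp
      | succ n ih =>
        rw [Finset.sum_range_succ]
        have := step n
        push_cast
        linarith
    have tele_m := tele m
    have hsumF : η * ∑ k ∈ Finset.range m, F k ≤ C 0 + m * (η * (ε/4)) := by
      have := hCnn m
      linarith
    -- C 0 ≤ (2/γℓ) * F 0
    have hC0 : C 0 ≤ 2 / γℓ * F 0 := by
      have hpt : ∀ ω, (w s 0 ω - wstar) ⬝ᵥ Q *ᵥ (w s 0 ω - wstar)
          ≤ 2 / γℓ * (f (w s 0 ω) - f wstar) := by
        intro ω
        have h1 := hlow s (w s 0 ω)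
        rw [ge_iff_le] at h1
        calc (w s 0 ω - wstar) ⬝ᵥ Q *ᵥ (w s 0 ω - wstar)
            = (2 / γℓ) * (γℓ / 2 * ((w s 0 ω - wstar) ⬝ᵥ Q *ᵥ (w s 0 ω - wstar))) := by
              rw [← mul_assoc]
              rw [show (2 / γℓ) * (γℓ / 2) = 1 by field_simp, one_mul]
          _ ≤ 2 / γℓ * (f (w s 0 ω) - f wstar) := by
              apply mul_le_mul_of_nonneg_left h1 (by positivity)
      have hint0 : Integrable (fun ω => f (w s 0 ω) - f wstar) μ :=
        (hfint s 0).sub (integrable_const _)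
      have hintm : Integrable (fun ω => 2 / γℓ * (f (w s 0 ω) - f wstar)) μ :=
        hint0.const_mul _
      have h5 := integral_mono (hqfint s 0) hintm fun ω => hpt ω
      rw [integral_const_mul, integral_sub (hfint s 0) (integrable_const _)] at h5
      simpa [hCdef, hFdef, integral_const, measure_univ] using h5
    -- Jensen at the stage boundary
    have hmne : (m:ℝ) ≠ 0 := Nat.cast_ne_zero.2 hm.ne'
    have hmpos : (0:ℝ) < m := by positivity
    have hptJ : ∀ ω, f (w (s+1) 0 ω) ≤ ∑ k ∈ Finset.range m, (m:ℝ)⁻¹ * f (w s k ω) := by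
      intro ω
      have hsum : w (s+1) 0 ω = ∑ k ∈ Finset.range m, (m:ℝ)⁻¹ • w s k ω := by
        rw [hstage s ω, Finset.smul_sum]
      have hw1 : (∑ _k ∈ Finset.range m, ((m:ℝ)⁻¹)) = 1 := by
        rw [Finset.sum_const, Finset.card_range, nsmul_eq_mul]
        field_simp
      have hJ := hconv.map_sum_le (t := Finset.range m) (w := fun _ => (m:ℝ)⁻¹)
        (p := fun k => w s k ω) (fun i _ => by positivity) hw1 (fun i _ => Set.mem_univ _)
      rw [← hsum] at hJ
      simpa [smul_eq_mul] using hJ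
    have hInt2 : Integrable (fun ω => ∑ k ∈ Finset.range m, (m:ℝ)⁻¹ * f (w s k ω)) μ :=
      integrable_finset_sum _ fun k _ => (hfint s k).const_mul _
    have hJint := integral_mono (hfint (s+1) 0) hInt2 hptJ
    rw [integral_finset_sum _ (fun k _ => (hfint s k).const_mul _)] at hJint
    simp only [integral_const_mul] at hJint
    have hJ2 : (∫ ω, f (w (s+1) 0 ω) ∂μ) - f wstar
        ≤ (m:ℝ)⁻¹ * ∑ k ∈ Finset.range m, F k := by
      have e : ∑ k ∈ Finset.range m, (m:ℝ)⁻¹ * ∫ ω, f (w s k ω) ∂μ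
          = (m:ℝ)⁻¹ * (∑ k ∈ Finset.range m, F k) + f wstar := by
        have e1 : ∀ k, (m:ℝ)⁻¹ * ∫ ω, f (w s k ω) ∂μ
            = (m:ℝ)⁻¹ * F k + (m:ℝ)⁻¹ * f wstar := by
          intro k; simp only [hFdef]; ring
        rw [Finset.sum_congr rfl fun k _ => e1 k, Finset.sum_add_distrib, ← Finset.mul_sum,
          Finset.sum_const, Finset.card_range, nsmul_eq_mul]
        field_simp
      rw [e] at hJint
      linarith
    -- combine everything
    have hD1 : 2 / γℓ ≤ η * m / 2 := by
      rw [div_le_div_iff₀ hγ (by norm_num : (0:ℝ) < 2)]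
      have : γℓ * η * ↑m = η * ↑m * γℓ := by ring
      linarith [this ▸ hγηm]
    have hC0' : C 0 ≤ η * m / 2 * F 0 :=
      hC0.trans (mul_le_mul_of_nonneg_right hD1 (hFnn 0))
    have hmain : (m:ℝ) * η * ((∫ ω, f (w (s+1) 0 ω) ∂μ) - f wstar)
        ≤ (m:ℝ) * η * (F 0 / 2 + ε / 4) := by
      have hA1 : (m:ℝ) * η * ((∫ ω, f (w (s+1) 0 ω) ∂μ) - f wstar)
          ≤ η * ∑ k ∈ Finset.range m, F k := by
        have h := mul_le_mul_of_nonneg_left hJ2 (by positivity : (0:ℝ) ≤ (m:ℝ) * η)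
        calc (m:ℝ) * η * ((∫ ω, f (w (s+1) 0 ω) ∂μ) - f wstar)
            ≤ (m:ℝ) * η * ((m:ℝ)⁻¹ * ∑ k ∈ Finset.range m, F k) := h
          _ = η * ∑ k ∈ Finset.range m, F k := by field_simp
      calc (m:ℝ) * η * ((∫ ω, f (w (s+1) 0 ω) ∂μ) - f wstar)
          ≤ C 0 + m * (η * (ε/4)) := le_trans hA1 hsumF
        _ ≤ η * m / 2 * F 0 + m * (η * (ε/4)) := by linarith
        _ = (m:ℝ) * η * (F 0 / 2 + ε / 4) := by ring
    have hres := le_of_mul_le_mul_left hmain (by positivity : (0:ℝ) < (m:ℝ) * η)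
    simpa [hFdef] using hres
  -- iterate the contraction
  have hΔ0 : (∫ ω, f (w 0 0 ω) ∂μ) - f wstar = f w0 - f wstar := by
    rw [hw0]; simp
  have hΔ0nn : 0 ≤ f w0 - f wstar := by linarith [hmin w0]
  have hrec : ∀ n : ℕ, (∫ ω, f (w n 0 ω) ∂μ) - f wstar
      ≤ (1/2:ℝ)^n * (f w0 - f wstar) + ε/2 := by
    intro n
    induction n with
    | zero => rw [hΔ0, pow_zero, one_mul]; linarith
    | succ n ih =>
      have h1 := key n
      have h2 : (1/2:ℝ)^(n+1) = (1/2:ℝ)^n * (1/2) := pow_succ _ _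
      calc (∫ ω, f (w (n+1) 0 ω) ∂μ) - f wstar
          ≤ ((∫ ω, f (w n 0 ω) ∂μ) - f wstar) / 2 + ε/4 := h1
        _ ≤ ((1/2:ℝ)^n * (f w0 - f wstar) + ε/2) / 2 + ε/4 := by linarith
        _ = (1/2:ℝ)^(n+1) * (f w0 - f wstar) + ε/2 := by rw [h2]; ring
  have hfinal := hrec S
  have hpow1 : (1/2:ℝ)^S ≤ 1 := pow_le_one₀ (by norm_num) (by norm_num)
  have hpownn : (0:ℝ) ≤ (1/2:ℝ)^S := by positivity
  by_cases hcase : f w0 - f wstar ≤ ε/2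
  · have : (1/2:ℝ)^S * (f w0 - f wstar) ≤ f w0 - f wstar :=
      mul_le_of_le_one_left hΔ0nn hpow1
    linarith
  · push_neg at hcase
    have hΔpos : 0 < f w0 - f wstar := by linarith
    have h2Δ : 1 ≤ 2 * (f w0 - f wstar) / ε := by
      rw [le_div_iff₀ hε]; linarith
    have hlognn : 0 ≤ Real.log (2 * (f w0 - f wstar) / ε) := Real.log_nonneg h2Δ
    have hlog2 : (1/2:ℝ) ≤ Real.log 2 := by
      have h := Real.log_two_gt_d9; norm_num at h ⊢; linarith
    have hSnn : (0:ℝ) ≤ S := Nat.cast_nonneg S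
    have hS2 : Real.log (2 * (f w0 - f wstar) / ε) ≤ (S:ℝ) * Real.log 2 := by
      have h1 : Real.log (2 * (f w0 - f wstar) / ε) ≤ (S:ℝ)/2 := by linarith
      have h2 : (S:ℝ) * (1/2) ≤ (S:ℝ) * Real.log 2 :=
        mul_le_mul_of_nonneg_left hlog2 hSnn
      linarith
    have hple : (1/2:ℝ)^S ≤ ε / (2 * (f w0 - f wstar)) := by
      have hL : (0:ℝ) < (1/2:ℝ)^S := by positivity
      have hR : (0:ℝ) < ε / (2 * (f w0 - f wstar)) := by positivity
      rw [← Real.log_le_log_iff hL hR, Real.log_pow]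
      have e1 : Real.log (1/2:ℝ) = -Real.log 2 := by rw [one_div, Real.log_inv]
      have e2 : Real.log (ε / (2 * (f w0 - f wstar)))
          = - Real.log (2 * (f w0 - f wstar) / ε) := by
        rw [← Real.log_inv]
        congr 1
        rw [inv_div]
      rw [e1, e2]
      have : (S:ℝ) * -Real.log 2 = -((S:ℝ) * Real.log 2) := by ring
      rw [this]
      linarith
    have hmulε : (1/2:ℝ)^S * (f w0 - f wstar) ≤ ε/2 := by
      have h := mul_le_mul_of_nonneg_right hple hΔ0nn
      have e : ε / (2 * (f w0 - f wstar)) * (f w0 - f wstar) = ε/2 := by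
        field_simp
      rw [e] at h
      linarith
    linarith
end

section
/- (Interpolation regime.) Under the hypotheses of the staged strongly convex convergence theorem with σ² = 0 — i.e., f convex differentiable with minimizer w_⋆; in each stage s, P^{(s)} symmetric positive definite with f(w) − f(w_⋆) ≥ (γ̂_ℓ/2)‖w − w_⋆‖²_{P^{(s)}} for all w; iterates w_{k+1}^{(s)} = w_k^{(s)} − η (P^{(s)})^{-1}g_k^{(s)} with conditionally unbiased g_k^{(s)} satisfying E_k‖g_k^{(s)}‖²_{(P^{(s)})^{-1}} ≤ 4L_P·(f(w_k^{(s)}) − f(w_⋆)); stage averaging as before — if η = 1/(4L_P), m = 16L_P/γ̂_ℓ inner iterations per stage, and s = 2·log(2(f(w_0) − f(w_⋆))/ε) stages (so ms total iterations of order (L_P/γ̂_ℓ)·log(1/ε)), then E[f(ŵ^{(s)}) − f(w_⋆)] ≤ ε. -/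
open Matrix MeasureTheory

section Helpers

variable {p : ℕ}

lemma quad_nonneg {Q : Matrix (Fin p) (Fin p) ℝ} (hQ : Q.PosSemidef) (x : Fin p → ℝ) :
    0 ≤ x ⬝ᵥ Q.mulVec x := by
  simpa using hQ.re_dotProduct_nonneg x

lemma transpose_eq {Q : Matrix (Fin p) (Fin p) ℝ} (hQ : Q.IsHermitian) : Qᵀ = Q := by
  rw [← Matrix.conjTranspose_eq_transpose_of_trivial]; exact hQ

lemma quad_symm {Q : Matrix (Fin p) (Fin p) ℝ} (hQ : Q.IsHermitian) (x y : Fin p → ℝ) :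
    x ⬝ᵥ Q.mulVec y = y ⬝ᵥ Q.mulVec x := by
  rw [Matrix.dotProduct_mulVec, ← Matrix.mulVec_transpose, transpose_eq hQ,
    dotProduct_comm]

/-- Cauchy–Schwarz for a positive semidefinite quadratic form. -/
lemma quad_cs {Q : Matrix (Fin p) (Fin p) ℝ} (hQ : Q.PosSemidef) (x y : Fin p → ℝ) :
    (x ⬝ᵥ Q.mulVec y) ^ 2 ≤ (x ⬝ᵥ Q.mulVec x) * (y ⬝ᵥ Q.mulVec y) := by
  have key : ∀ t : ℝ, 0 ≤ (y ⬝ᵥ Q.mulVec y) * (t * t) + (2 * (x ⬝ᵥ Q.mulVec y)) * t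
      + (x ⬝ᵥ Q.mulVec x) := by
    intro t
    have h := quad_nonneg hQ (x + t • y)
    have hxy := quad_symm hQ.1 x y
    simp only [Matrix.mulVec_add, Matrix.mulVec_smul, dotProduct_add,
      add_dotProduct, dotProduct_smul, smul_dotProduct,
      smul_eq_mul] at h
    rw [← hxy] at h
    ring_nf at h ⊢
    linarith
  have := discrim_le_zero key
  rw [discrim] at this
  nlinarith [this]

lemma coord_sq_le {Q : Matrix (Fin p) (Fin p) ℝ} (hQ : Q.PosDef) :
    ∃ c : ℝ, 0 ≤ c ∧ ∀ (x : Fin p → ℝ) (i : Fin p),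
      (x i) ^ 2 ≤ c * (x ⬝ᵥ Q.mulVec x) := by
  have hdet : IsUnit Q.det := isUnit_iff_ne_zero.2 hQ.det_pos.ne'
  set y : Fin p → Fin p → ℝ := fun i => Q⁻¹.mulVec (Pi.single i 1) with hy
  refine ⟨∑ i, y i ⬝ᵥ Q.mulVec (y i), Finset.sum_nonneg fun i _ =>
    quad_nonneg hQ.posSemidef _, fun x i => ?_⟩
  have hxy : x ⬝ᵥ Q.mulVec (y i) = x i := by
    rw [hy, Matrix.mulVec_mulVec, Matrix.mul_nonsing_inv _ hdet, Matrix.one_mulVec,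
      dotProduct_single, mul_one]
  have hcs := quad_cs hQ.posSemidef x (y i)
  rw [hxy] at hcs
  have hle : y i ⬝ᵥ Q.mulVec (y i) ≤ ∑ j, y j ⬝ᵥ Q.mulVec (y j) :=
    Finset.single_le_sum (fun j _ => quad_nonneg hQ.posSemidef _) (Finset.mem_univ i)
  nlinarith [quad_nonneg hQ.posSemidef x]

lemma gradVec_dot (f : (Fin p → ℝ) → ℝ) (w v : Fin p → ℝ) :
    gradVec f w ⬝ᵥ v = fderiv ℝ f w v := by
  have hv : v = ∑ i, v i • (Pi.single i (1:ℝ) : Fin p → ℝ) := by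
    funext j
    simp [Finset.sum_apply, Pi.single_apply]
  conv_rhs => rw [hv]
  rw [map_sum]
  simp [gradVec, dotProduct, mul_comm]

lemma convex_grad_ineq {f : (Fin p → ℝ) → ℝ} (hdiff : Differentiable ℝ f)
    (hconv : ConvexOn ℝ Set.univ f) (x y : Fin p → ℝ) :
    fderiv ℝ f x (y - x) ≤ f y - f x := by
  set φ : ℝ → ℝ := fun t => f (x + t • (y - x)) with hφ
  have hc : HasDerivAt (fun t : ℝ => x + t • (y - x)) (y - x) 0 := by
    simpa using ((hasDerivAt_id (0:ℝ)).smul_const (y - x)).const_add x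
  have hder : HasDerivAt φ (fderiv ℝ f x (y - x)) 0 := by
    have h0 : x + (0:ℝ) • (y - x) = x := by simp
    have := HasFDerivAt.comp_hasDerivAt 0 (h0 ▸ (hdiff x).hasFDerivAt) hc
    simpa [hφ, Function.comp_def] using this
  have hφconv : ConvexOn ℝ Set.univ φ := by
    have := hconv.comp_affineMap (AffineMap.lineMap x y : ℝ →ᵃ[ℝ] (Fin p → ℝ))
    have heq : φ = f ∘ (AffineMap.lineMap x y : ℝ →ᵃ[ℝ] (Fin p → ℝ)) := by
      funext t
      simp [hφ, AffineMap.lineMap_apply, Function.comp]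
      ring_nf
    rw [heq]
    simpa using this
  have hslope := hφconv.le_slope_of_hasDerivAt (Set.mem_univ 0) (Set.mem_univ 1)
    one_pos hder
  have : slope φ 0 1 = f y - f x := by
    simp [slope, hφ]
  linarith [hslope.trans_eq this]

lemma quad_update {Q : Matrix (Fin p) (Fin p) ℝ} (hQ : Q.PosDef) (d gv : Fin p → ℝ) (η : ℝ) :
    (d - η • Q⁻¹.mulVec gv) ⬝ᵥ Q.mulVec (d - η • Q⁻¹.mulVec gv)
      = d ⬝ᵥ Q.mulVec d - 2*η*(gv ⬝ᵥ d) + η^2 * (gv ⬝ᵥ Q⁻¹.mulVec gv) := by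
  have hdet : IsUnit Q.det := isUnit_iff_ne_zero.2 hQ.det_pos.ne'
  have hkey : ∀ z : Fin p → ℝ, (Q⁻¹.mulVec gv) ⬝ᵥ Q.mulVec z = gv ⬝ᵥ z := by
    intro z
    rw [Matrix.dotProduct_mulVec, ← Matrix.mulVec_transpose, transpose_eq hQ.1,
      Matrix.mulVec_mulVec, Matrix.mul_nonsing_inv _ hdet, Matrix.one_mulVec]
  have h2 : d ⬝ᵥ Q.mulVec (Q⁻¹.mulVec gv) = gv ⬝ᵥ d := by
    rw [quad_symm hQ.1, hkey]
  have h3 := hkey (Q⁻¹.mulVec gv)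
  simp only [Matrix.mulVec_sub, dotProduct_sub, sub_dotProduct,
    Matrix.mulVec_smul, dotProduct_smul, smul_dotProduct, smul_eq_mul,
    hkey, h2, h3]
  ring

lemma quad_continuous {Q : Matrix (Fin p) (Fin p) ℝ} (c : Fin p → ℝ) :
    Continuous (fun v : Fin p → ℝ => (v - c) ⬝ᵥ Q.mulVec (v - c)) := by
  have : (fun v : Fin p → ℝ => (v - c) ⬝ᵥ Q.mulVec (v - c))
      = fun v => ∑ i, (v i - c i) * ∑ j, Q i j * (v j - c j) := by
    funext v
    simp [dotProduct, Matrix.mulVec]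
  rw [this]
  fun_prop

end Helpers

set_option maxHeartbeats 2000000 in
/-- **SketchySGD convergence under interpolation (`σ² = 0`).**
Let `f` be convex and differentiable with minimizer `w⋆`, `ρ, L_P, γ̂_ℓ, ε > 0`.
In each stage `s` a positive definite `P⁽ˢ⁾` satisfies
`f(w) − f(w⋆) ≥ (γ̂_ℓ/2)‖w − w⋆‖²_{P⁽ˢ⁾}`, and the inner iterates are
`w_{k+1}⁽ˢ⁾ = w_k⁽ˢ⁾ − η(P⁽ˢ⁾)⁻¹g_k⁽ˢ⁾` with conditionally unbiased `g_k⁽ˢ⁾`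
satisfying `E_k‖g_k⁽ˢ⁾‖²_{(P⁽ˢ⁾)⁻¹} ≤ 4L_P(f(w_k⁽ˢ⁾) − f(w⋆))`; each stage starts at
the average of the previous stage.  With `η = 1/(4L_P)`, `m ≥ 16L_P/γ̂_ℓ` inner
iterations per stage, and `S ≥ 2·log(2(f(w₀) − f(w⋆))/ε)` stages, the output `ŵ⁽ˢ⁾`
satisfies `E[f(ŵ⁽ˢ⁾) − f(w⋆)] ≤ ε`. -/
theorem sketchySGD_interpolation_convergence {p : ℕ}
    (f : (Fin p → ℝ) → ℝ) (hdiff : Differentiable ℝ f)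
    (hconv : ConvexOn ℝ Set.univ f)
    (wstar : Fin p → ℝ) (hmin : ∀ w, f wstar ≤ f w)
    (ρ LP γℓ ε : ℝ) (hρ : 0 < ρ) (hLP : 0 < LP) (hγ : 0 < γℓ) (hε : 0 < ε)
    (P : ℕ → Matrix (Fin p) (Fin p) ℝ) (hP : ∀ s, (P s).PosDef)
    (hlow : ∀ (s : ℕ) (w : Fin p → ℝ),
      f w - f wstar ≥ γℓ / 2 * ((w - wstar) ⬝ᵥ (P s).mulVec (w - wstar)))
    (m S : ℕ) (hm : 0 < m) (hS : 0 < S)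
    (hm' : (m : ℝ) ≥ 16 * LP / γℓ)
    {Ω : Type} {m0 : MeasurableSpace Ω} (μ : Measure Ω) [IsProbabilityMeasure μ]
    (ℱ : ℕ → MeasurableSpace Ω) (hℱ : ∀ t, ℱ t ≤ m0) (hℱmono : Monotone ℱ)
    (w g : ℕ → ℕ → Ω → Fin p → ℝ)
    (w0 : Fin p → ℝ) (hw0 : w 0 0 = fun _ => w0)
    (hSlog : (S : ℝ) ≥ 2 * Real.log (2 * (f w0 - f wstar) / ε))
    (hadapt : ∀ s k, StronglyMeasurable[ℱ (s * m + k)] (w s k))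
    (hgint : ∀ s k, Integrable (g s k) μ)
    (hg2int : ∀ s k,
      Integrable (fun ω => g s k ω ⬝ᵥ ((P s)⁻¹).mulVec (g s k ω)) μ)
    (hfint : ∀ s k, Integrable (fun ω => f (w s k ω)) μ)
    (η : ℝ) (hη : η = 1 / (4 * LP))
    (hupd : ∀ s k ω, w s (k + 1) ω = w s k ω - η • ((P s)⁻¹).mulVec (g s k ω))
    (hstage : ∀ s ω, w (s + 1) 0 ω = (m : ℝ)⁻¹ • ∑ k ∈ Finset.range m, w s k ω)
    (hmean : ∀ s k, μ[g s k|ℱ (s * m + k)] =ᵐ[μ] fun ω => gradVec f (w s k ω))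
    (hvar : ∀ s k, ∀ᵐ ω ∂μ,
      (μ[fun ω' => g s k ω' ⬝ᵥ ((P s)⁻¹).mulVec (g s k ω')|ℱ (s * m + k)]) ω
        ≤ 4 * LP * (f (w s k ω) - f wstar)) :
    (∫ ω, f (w S 0 ω) ∂μ) - f wstar ≤ ε := by
  have hη' : 0 < η := by rw [hη]; positivity
  have hη4 : η * (4 * LP) = 1 := by rw [hη]; field_simp
  -- expected suboptimality
  set A : ℕ → ℕ → ℝ := fun s k => (∫ ω, f (w s k ω) ∂μ) - f wstar with hA
  -- P-weighted squared distance
  set X : ℕ → ℕ → Ω → ℝ :=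
    fun s k ω => (w s k ω - wstar) ⬝ᵥ (P s).mulVec (w s k ω - wstar) with hX
  have hAnonneg : ∀ s k, 0 ≤ A s k := by
    intro s k
    have h := integral_mono (integrable_const (f wstar)) (hfint s k) fun ω => hmin _
    simp only [integral_const, measure_univ, probReal_univ, smul_eq_mul, one_mul] at h
    simp only [hA]
    linarith
  have hXmeas : ∀ s k, AEStronglyMeasurable (X s k) μ := by
    intro s k
    exact ((quad_continuous (Q := P s) wstar).comp_stronglyMeasurable
      ((hadapt s k).mono (hℱ _))).aestronglyMeasurable
  have hXnonneg : ∀ s k ω, 0 ≤ X s k ω := fun s k ω =>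
    quad_nonneg (hP s).posSemidef _
  have hX0le : ∀ s ω, X s 0 ω ≤ 2 / γℓ * (f (w s 0 ω) - f wstar) := by
    intro s ω
    have h := hlow s (w s 0 ω)
    have h2 := mul_le_mul_of_nonneg_left h (by positivity : (0:ℝ) ≤ 2 / γℓ)
    calc X s 0 ω = 2 / γℓ * (γℓ / 2 * X s 0 ω) := by field_simp
    _ ≤ 2 / γℓ * (f (w s 0 ω) - f wstar) := h2
  have hX0int : ∀ s, Integrable (X s 0) μ := by
    intro s
    refine Integrable.mono'
      (((hfint s 0).sub (integrable_const (f wstar))).const_mul (2/γℓ)) (hXmeas s 0) ?_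
    filter_upwards with ω
    rw [Real.norm_eq_abs, abs_of_nonneg (hXnonneg s 0 ω)]
    exact hX0le s ω
  -- the inner-loop one-step inequality
  have step : ∀ s k, Integrable (X s k) μ → Integrable (X s (k+1)) μ ∧
      ∫ ω, X s (k+1) ω ∂μ ≤ ∫ ω, X s k ω ∂μ - η * A s k := by
    intro s k hXk
    obtain ⟨c1, hc1, hc1'⟩ := coord_sq_le (hP s).inv
    obtain ⟨c2, hc2, hc2'⟩ := coord_sq_le (hP s)
    set d : Ω → Fin p → ℝ := fun ω => w s k ω - wstar with hd
    set quadg : Ω → ℝ := fun ω => g s k ω ⬝ᵥ ((P s)⁻¹).mulVec (g s k ω) with hquadg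
    -- pointwise expansion of the update
    have hpt : ∀ ω, X s (k+1) ω
        = X s k ω - 2*η*(g s k ω ⬝ᵥ d ω) + η^2 * quadg ω := by
      intro ω
      have hsub : w s (k+1) ω - wstar = d ω - η • ((P s)⁻¹).mulVec (g s k ω) := by
        rw [hupd s k ω, hd, sub_right_comm]
      simp only [hX, hsub]
      exact quad_update (hP s) (d ω) (g s k ω) η
    -- measurability of coordinates
    have hgm : AEStronglyMeasurable (g s k) μ := (hgint s k).1
    have hgim : ∀ i, AEStronglyMeasurable (fun ω => g s k ω i) μ := fun i =>
      (continuous_apply i).comp_aestronglyMeasurable hgm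
    have hdim : ∀ i, StronglyMeasurable[ℱ (s*m+k)] (fun ω => d ω i) := fun i =>
      ((continuous_apply i).comp_stronglyMeasurable (hadapt s k)).sub
        stronglyMeasurable_const
    -- integrability of coordinate products
    have hmaj : Integrable (fun ω => (c1 * quadg ω + c2 * X s k ω) / 2) μ :=
      (((hg2int s k).const_mul c1).add (hXk.const_mul c2)).div_const 2
    have hbd : ∀ (i : Fin p) ω,
        |g s k ω i * d ω i| ≤ (c1 * quadg ω + c2 * X s k ω) / 2 := by
      intro i ω
      have h1 := hc1' (g s k ω) i
      have h2 := hc2' (d ω) i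
      rw [abs_mul]
      nlinarith [sq_nonneg (|g s k ω i| - |d ω i|), sq_abs (g s k ω i),
        sq_abs (d ω i), abs_nonneg (g s k ω i), abs_nonneg (d ω i)]
    have hbound : ∀ i : Fin p, Integrable (fun ω => g s k ω i * d ω i) μ := by
      intro i
      refine Integrable.mono' hmaj
        ((hgim i).mul ((hdim i).mono (hℱ _)).aestronglyMeasurable) ?_
      filter_upwards with ω
      rw [Real.norm_eq_abs]
      exact hbd i ω
    have hdot_eq : (fun ω => g s k ω ⬝ᵥ d ω)
        = fun ω => ∑ i, g s k ω i * d ω i := by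
      funext ω; rfl
    have hDint : Integrable (fun ω => g s k ω ⬝ᵥ d ω) μ := by
      rw [hdot_eq]
      exact integrable_finset_sum _ fun i _ => hbound i
    -- coordinates of g are integrable
    have hgiint : ∀ i, Integrable (fun ω => g s k ω i) μ := by
      intro i
      refine Integrable.mono' (hgint s k).norm (hgim i) ?_
      filter_upwards with ω
      exact norm_le_pi_norm (g s k ω) i
    -- the gradient process
    have hgradint : Integrable (fun ω => gradVec f (w s k ω)) μ :=
      integrable_condExp.congr (hmean s k)
    have hGim : ∀ i, StronglyMeasurable[ℱ (s*m+k)]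
        (fun ω => gradVec f (w s k ω) i) := by
      intro i
      exact ((measurable_fderiv_apply_const ℝ f (Pi.single i 1)).comp
        (hadapt s k).measurable).stronglyMeasurable
    have hGiint : ∀ i, Integrable (fun ω => gradVec f (w s k ω) i) μ := by
      intro i
      refine Integrable.mono' hgradint.norm
        ((hGim i).mono (hℱ _)).aestronglyMeasurable ?_
      filter_upwards with ω
      exact norm_le_pi_norm (gradVec f (w s k ω)) i
    -- coordinates of the gradient are the conditional expectations of g's coordinates
    have hGcond : ∀ i, (fun ω => gradVec f (w s k ω) i)
        =ᵐ[μ] μ[(fun ω => g s k ω i)|ℱ (s*m+k)] := by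
      intro i
      refine ae_eq_condExp_of_forall_setIntegral_eq (hℱ _) (hgiint i)
        (fun B hB hμB => (hGiint i).integrableOn)
        (fun B hB hμB => ?_)
        ((hGim i).aestronglyMeasurable)
      have hv : ∫ ω in B, gradVec f (w s k ω) ∂μ = ∫ ω in B, g s k ω ∂μ := by
        rw [← setIntegral_condExp (hℱ _) (hgint s k) hB]
        refine setIntegral_congr_ae (hℱ _ _ hB) ?_
        filter_upwards [hmean s k] with ω hω _
        exact hω.symm
      have e1 := (ContinuousLinearMap.proj (R := ℝ) (φ := fun _ : Fin p => ℝ) i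
        ).integral_comp_comm (μ := μ.restrict B) hgradint.integrableOn
      have e2 := (ContinuousLinearMap.proj (R := ℝ) (φ := fun _ : Fin p => ℝ) i
        ).integral_comp_comm (μ := μ.restrict B) (hgint s k).integrableOn
      simp only [ContinuousLinearMap.proj_apply] at e1 e2
      have e3 : (∫ ω in B, gradVec f (w s k ω) ∂μ) i = (∫ ω in B, g s k ω ∂μ) i := by
        rw [hv]
      exact e1.trans (e3.trans e2.symm)
    -- pull-out property coordinatewise
    have hpull : ∀ i, ∫ ω, g s k ω i * d ω i ∂μ
        = ∫ ω, gradVec f (w s k ω) i * d ω i ∂μ := by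
      intro i
      have hmul : Integrable ((fun ω => d ω i) * (fun ω => g s k ω i)) μ := by
        have := hbound i
        refine this.congr ?_
        filter_upwards with ω
        simp [mul_comm]
      have h1 := condExp_mul_of_stronglyMeasurable_left (hdim i) hmul (hgiint i)
      calc ∫ ω, g s k ω i * d ω i ∂μ
          = ∫ ω, ((fun ω => d ω i) * (fun ω => g s k ω i)) ω ∂μ := by
            congr 1; funext ω; simp [mul_comm]
        _ = ∫ ω, (μ[(fun ω => d ω i) * (fun ω => g s k ω i)|ℱ (s*m+k)]) ω ∂μ :=
            (integral_condExp (hℱ _)).symm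
        _ = ∫ ω, ((fun ω => d ω i) * μ[(fun ω => g s k ω i)|ℱ (s*m+k)]) ω ∂μ :=
            integral_congr_ae h1
        _ = ∫ ω, gradVec f (w s k ω) i * d ω i ∂μ := by
            refine integral_congr_ae ?_
            filter_upwards [hGcond i] with ω hω
            show d ω i * (μ[(fun ω => g s k ω i)|ℱ (s*m+k)]) ω = _
            rw [← hω, mul_comm]
    have hGdint : ∀ i, Integrable (fun ω => gradVec f (w s k ω) i * d ω i) μ := by
      intro i
      have hmul : Integrable ((fun ω => d ω i) * (fun ω => g s k ω i)) μ := by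
        refine (hbound i).congr ?_
        filter_upwards with ω
        simp [mul_comm]
      have h1 := condExp_mul_of_stronglyMeasurable_left (hdim i) hmul (hgiint i)
      have h2 : Integrable ((fun ω => d ω i) * μ[(fun ω => g s k ω i)|ℱ (s*m+k)]) μ :=
        integrable_condExp.congr h1
      refine h2.congr ?_
      filter_upwards [hGcond i] with ω hω
      show d ω i * (μ[(fun ω => g s k ω i)|ℱ (s*m+k)]) ω = _
      rw [← hω, mul_comm]
    -- lower bound on the drift
    have hDge : A s k ≤ ∫ ω, g s k ω ⬝ᵥ d ω ∂μ := by
      have hsum : ∫ ω, g s k ω ⬝ᵥ d ω ∂μ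
          = ∫ ω, (∑ i, gradVec f (w s k ω) i * d ω i) ∂μ := by
        rw [hdot_eq, integral_finset_sum _ fun i _ => hbound i]
        rw [integral_finset_sum _ fun i _ => hGdint i]
        exact Finset.sum_congr rfl fun i _ => hpull i
      have hptw : ∀ ω, f (w s k ω) - f wstar
          ≤ ∑ i, gradVec f (w s k ω) i * d ω i := by
        intro ω
        have h1 : (∑ i, gradVec f (w s k ω) i * d ω i)
            = gradVec f (w s k ω) ⬝ᵥ d ω := rfl
        rw [h1, gradVec_dot]
        have h2 := convex_grad_ineq hdiff hconv (w s k ω) wstar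
        have h3 : fderiv ℝ f (w s k ω) (d ω)
            = - fderiv ℝ f (w s k ω) (wstar - w s k ω) := by
          rw [← map_neg]
          congr 1
          simp [hd, neg_sub]
        rw [h3]
        linarith
      have hsubint : Integrable (fun ω => f (w s k ω) - f wstar) μ := by
        exact (hfint s k).sub (integrable_const (f wstar))
      have h4 : A s k ≤ ∫ ω, (∑ i, gradVec f (w s k ω) i * d ω i) ∂μ := by
        have h5 := integral_mono hsubint
          (integrable_finset_sum _ fun i _ => hGdint i) hptw
        rw [integral_sub (hfint s k) (integrable_const (f wstar)),
          integral_const] at h5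
        simp only [measure_univ, probReal_univ, smul_eq_mul, one_mul] at h5
        simpa [hA] using h5
      rw [hsum]; exact h4
    -- upper bound on the noise
    have hquadle : ∫ ω, quadg ω ∂μ ≤ 4 * LP * A s k := by
      have h1 : ∫ ω, quadg ω ∂μ = ∫ ω, (μ[quadg|ℱ (s*m+k)]) ω ∂μ :=
        (integral_condExp (hℱ _)).symm
      have h2 : ∫ ω, (μ[quadg|ℱ (s*m+k)]) ω ∂μ
          ≤ ∫ ω, 4 * LP * (f (w s k ω) - f wstar) ∂μ :=
        integral_mono_ae integrable_condExp
          (((hfint s k).sub (integrable_const (f wstar))).const_mul (4*LP))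
          (hvar s k)
      have h3 : ∫ ω, 4 * LP * (f (w s k ω) - f wstar) ∂μ = 4 * LP * A s k := by
        rw [MeasureTheory.integral_const_mul,
          integral_sub (hfint s k) (integrable_const (f wstar)), integral_const]
        simp only [measure_univ, probReal_univ, smul_eq_mul, one_mul]
        rfl
      rw [h1, ← h3]; exact h2
    -- combine
    have hi1 : Integrable (fun ω => X s k ω - 2*η*(g s k ω ⬝ᵥ d ω)) μ := by
      exact hXk.sub (hDint.const_mul _)
    have hi2 : Integrable (fun ω => η^2 * quadg ω) μ := by
      exact (hg2int s k).const_mul _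
    have hi3 : Integrable (fun ω => 2*η*(g s k ω ⬝ᵥ d ω)) μ := by
      exact hDint.const_mul _
    have heq : (X s (k+1)) = fun ω => X s k ω - 2*η*(g s k ω ⬝ᵥ d ω) + η^2 * quadg ω := by
      funext ω; exact hpt ω
    have hXk1int : Integrable (X s (k+1)) μ := by
      rw [heq]; exact hi1.add hi2
    refine ⟨hXk1int, ?_⟩
    have hint1 : ∫ ω, X s (k+1) ω ∂μ
        = ∫ ω, X s k ω ∂μ - 2*η*(∫ ω, g s k ω ⬝ᵥ d ω ∂μ) + η^2 * ∫ ω, quadg ω ∂μ := by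
      rw [heq, integral_add hi1 hi2, integral_sub hXk hi3,
        MeasureTheory.integral_const_mul, MeasureTheory.integral_const_mul]
    rw [hint1]
    have e1 : 2*η*(A s k) ≤ 2*η*(∫ ω, g s k ω ⬝ᵥ d ω ∂μ) := by
      apply mul_le_mul_of_nonneg_left hDge; positivity
    have e2 : η^2 * ∫ ω, quadg ω ∂μ ≤ η^2 * (4 * LP * A s k) :=
      mul_le_mul_of_nonneg_left hquadle (sq_nonneg η)
    have e3 : η^2 * (4 * LP * A s k) = η * A s k := by
      have : η^2 * (4 * LP) = η := by rw [sq]; rw [mul_assoc, hη4, mul_one]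
      calc η^2 * (4 * LP * A s k) = (η^2 * (4*LP)) * A s k := by ring
        _ = η * A s k := by rw [this]
    nlinarith [e1, e2, e3]
  -- iterate within a stage
  have stage : ∀ s, A (s+1) 0 ≤ 1/2 * A s 0 := by
    intro s
    -- telescoping over the inner loop
    have hiter : ∀ k : ℕ, Integrable (X s k) μ ∧
        ∫ ω, X s k ω ∂μ + η * ∑ j ∈ Finset.range k, A s j ≤ ∫ ω, X s 0 ω ∂μ := by
      intro k
      induction k with
      | zero => exact ⟨hX0int s, by simp⟩
      | succ k ih =>
        obtain ⟨hint, hle⟩ := ih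
        obtain ⟨hint', hle'⟩ := step s k hint
        refine ⟨hint', ?_⟩
        rw [Finset.sum_range_succ]
        have : η * (∑ j ∈ Finset.range k, A s j + A s k)
            = η * ∑ j ∈ Finset.range k, A s j + η * A s k := by ring
        rw [this]
        linarith
    obtain ⟨hintm, hlem⟩ := hiter m
    have hXm_nonneg : 0 ≤ ∫ ω, X s m ω ∂μ :=
      integral_nonneg fun ω => hXnonneg s m ω
    have hX0ub : ∫ ω, X s 0 ω ∂μ ≤ 2/γℓ * A s 0 := by
      have hsub0 : Integrable (fun ω => f (w s 0 ω) - f wstar) μ := by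
        exact (hfint s 0).sub (integrable_const (f wstar))
      have h1 := integral_mono (hX0int s) (hsub0.const_mul (2/γℓ))
        (fun ω => hX0le s ω)
      rw [MeasureTheory.integral_const_mul,
        integral_sub (hfint s 0) (integrable_const (f wstar)), integral_const] at h1
      simp only [measure_univ, probReal_univ, smul_eq_mul, one_mul] at h1
      exact h1
    have hsumle : η * ∑ j ∈ Finset.range m, A s j ≤ 2/γℓ * A s 0 := by
      linarith
    -- averaging and convexity
    have havg : A (s+1) 0 ≤ (m:ℝ)⁻¹ * ∑ j ∈ Finset.range m, A s j := by
      have hptw : ∀ ω, f (w (s+1) 0 ω)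
          ≤ ∑ j ∈ Finset.range m, (m:ℝ)⁻¹ * f (w s j ω) := by
        intro ω
        have hw : w (s+1) 0 ω = ∑ j ∈ Finset.range m, (m:ℝ)⁻¹ • w s j ω := by
          rw [hstage s ω, Finset.smul_sum]
        rw [hw]
        refine hconv.map_sum_le (fun j _ => by positivity) ?_ (fun j _ => Set.mem_univ _)
        rw [Finset.sum_const, Finset.card_range, nsmul_eq_mul]
        field_simp
      have h1 := integral_mono (hfint (s+1) 0)
        (integrable_finset_sum _ fun j _ => (hfint s j).const_mul _) hptw
      rw [integral_finset_sum _ fun j _ => (hfint s j).const_mul _] at h1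
      simp only [MeasureTheory.integral_const_mul] at h1
      have h2 : ∑ j ∈ Finset.range m, (m:ℝ)⁻¹ * ∫ ω, f (w s j ω) ∂μ
          = (m:ℝ)⁻¹ * ∑ j ∈ Finset.range m, (A s j + f wstar) := by
        rw [Finset.mul_sum]
        refine Finset.sum_congr rfl fun j _ => ?_
        simp [hA]
      have h3 : (m:ℝ)⁻¹ * ∑ j ∈ Finset.range m, (A s j + f wstar)
          = (m:ℝ)⁻¹ * (∑ j ∈ Finset.range m, A s j) + f wstar := by
        rw [Finset.sum_add_distrib, Finset.sum_const, Finset.card_range, nsmul_eq_mul,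
          mul_add]
        congr 1
        field_simp
      have h4 : A (s+1) 0 = (∫ ω, f (w (s+1) 0 ω) ∂μ) - f wstar := rfl
      rw [h4]
      rw [h2, h3] at h1
      linarith
    -- combine the two
    have hmpos : (0:ℝ) < m := Nat.cast_pos.mpr hm
    have hsum_nonneg : 0 ≤ ∑ j ∈ Finset.range m, A s j :=
      Finset.sum_nonneg fun j _ => hAnonneg s j
    have hkey : (m:ℝ)⁻¹ * ∑ j ∈ Finset.range m, A s j ≤ 1/2 * A s 0 := by
      have h5 : ∑ j ∈ Finset.range m, A s j ≤ 2/(γℓ * η) * A s 0 := by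
        have := hsumle
        rw [div_mul_eq_mul_div, le_div_iff₀ (by positivity)]
        calc (∑ j ∈ Finset.range m, A s j) * (γℓ * η)
            = γℓ * (η * ∑ j ∈ Finset.range m, A s j) := by ring
          _ ≤ γℓ * (2/γℓ * A s 0) := by
              apply mul_le_mul_of_nonneg_left this hγ.le
          _ = 2 * A s 0 := by field_simp
      have h6 : (m:ℝ)⁻¹ * (2/(γℓ * η)) ≤ 1/2 := by
        rw [hη]
        have h7 : 2/(γℓ * (1/(4*LP))) = 8*LP/γℓ := by
          rw [div_eq_div_iff (by positivity) hγ.ne']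
          field_simp
          ring
        rw [h7]
        have h8 : 16*LP/γℓ = 2*(8*LP/γℓ) := by ring
        have h9 : 8*LP/γℓ ≤ (m:ℝ)/2 := by
          rw [h8] at hm'
          linarith
        have h10 : (0:ℝ) ≤ 8*LP/γℓ := by positivity
        calc (m:ℝ)⁻¹ * (8*LP/γℓ) ≤ (m:ℝ)⁻¹ * ((m:ℝ)/2) := by
              exact mul_le_mul_of_nonneg_left h9 (by positivity)
          _ = 1/2 := by field_simp
      calc (m:ℝ)⁻¹ * ∑ j ∈ Finset.range m, A s j
          ≤ (m:ℝ)⁻¹ * (2/(γℓ * η) * A s 0) := by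
            apply mul_le_mul_of_nonneg_left _ (by positivity)
            exact h5
        _ = ((m:ℝ)⁻¹ * (2/(γℓ * η))) * A s 0 := by ring
        _ ≤ 1/2 * A s 0 :=
            mul_le_mul_of_nonneg_right h6 (hAnonneg s 0)
    linarith
  -- geometric decay across stages
  have hgeo : ∀ s : ℕ, A s 0 ≤ (1/2)^s * A 0 0 := by
    intro s
    induction s with
    | zero => simp
    | succ s ih =>
      calc A (s+1) 0 ≤ 1/2 * A s 0 := stage s
        _ ≤ 1/2 * ((1/2)^s * A 0 0) := by linarith [ih]
        _ = (1/2)^(s+1) * A 0 0 := by ring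
  -- identify the initial gap
  have hA00 : A 0 0 = f w0 - f wstar := by
    simp only [hA, hw0]
    rw [integral_const]
    simp
  -- conclude via the logarithmic bound on S
  have hfinal : (1/2:ℝ)^S * (f w0 - f wstar) ≤ ε := by
    set Δ := f w0 - f wstar with hΔ
    have hΔ0 : 0 ≤ Δ := by
      have := hmin w0; simp only [hΔ]; linarith
    by_cases hcase : Δ ≤ ε
    · have h1 : (1/2:ℝ)^S ≤ 1 := by
        first
        | exact pow_le_one₀ (by norm_num) (by norm_num)
        | exact pow_le_one _ (by norm_num) (by norm_num)
      nlinarith [mul_le_mul_of_nonneg_right h1 hΔ0]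
    · push_neg at hcase
      have hΔpos : 0 < Δ := lt_trans hε hcase
      have hlogpos : 0 < Real.log (2 * Δ / ε) := by
        apply Real.log_pos
        rw [lt_div_iff₀ hε]
        linarith
      have hSlog2 : Real.log (Δ/ε) ≤ (S:ℝ) * Real.log 2 := by
        have h1 : Real.log (Δ/ε) ≤ Real.log (2*Δ/ε) := by
          apply (Real.log_le_log_iff (by positivity) (by positivity)).mpr
          gcongr
          linarith
        have h2 : Real.log (2*Δ/ε) ≤ (S:ℝ) * Real.log 2 := by
          have h3 : (2:ℝ) * Real.log 2 ≥ 1 := by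
            linarith [Real.log_two_gt_d9]
          calc Real.log (2*Δ/ε) = 1 * Real.log (2*Δ/ε) := (one_mul _).symm
            _ ≤ (2 * Real.log 2) * Real.log (2*Δ/ε) :=
                mul_le_mul_of_nonneg_right h3 hlogpos.le
            _ = Real.log 2 * (2 * Real.log (2*Δ/ε)) := by ring
            _ ≤ Real.log 2 * (S:ℝ) :=
                mul_le_mul_of_nonneg_left hSlog (Real.log_nonneg (by norm_num))
            _ = (S:ℝ) * Real.log 2 := mul_comm _ _
        linarith
      have h4 : Δ/ε ≤ (2:ℝ)^S := by
        have h9 : Real.log (Δ/ε) ≤ Real.log ((2:ℝ)^S) := by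
          rw [Real.log_pow]
          exact hSlog2
        exact (Real.log_le_log_iff (by positivity) (by positivity)).mp h9
      have h5 : Δ ≤ ε * 2^S := by
        rw [div_le_iff₀ hε] at h4
        linarith [h4]
      have h2S : ((2:ℝ)^S) ≠ 0 := by positivity
      have h6 : ((2:ℝ)^S)⁻¹ * (ε * 2^S) = ε := by
        rw [mul_comm ε, ← mul_assoc, inv_mul_cancel₀ h2S, one_mul]
      calc (1/2:ℝ)^S * Δ = ((2:ℝ)^S)⁻¹ * Δ := by
            rw [one_div, inv_pow]
        _ ≤ ((2:ℝ)^S)⁻¹ * (ε * 2^S) := by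
            exact mul_le_mul_of_nonneg_left h5 (by positivity)
        _ = ε := h6
  calc (∫ ω, f (w S 0 ω) ∂μ) - f wstar = A S 0 := rfl
    _ ≤ (1/2)^S * A 0 0 := hgeo S
    _ = (1/2)^S * (f w0 - f wstar) := by rw [hA00]
    _ ≤ ε := hfinal
end
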